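/- arXiv:1303.6933 — 4 statements merged into one kernel-verified Lean document; each statement's English description precedes it below -/
import Mathlib

section
/- Let n ≥ 2 and let B = {z ∈ ℂⁿ : ‖z‖ < 1} be the open unit ball. Then every function f : ℂⁿ → ℂ analytic on B ∖ {0} extends to a function g : ℂⁿ → ℂ analytic on B with g = f on B ∖ {0}. -/
open Finset Metric Set Complex
open scoped ENNReal NNReal Topology

private lemma alt_sum_superset {k : ℕ} (A : Finset (Fin k)) :
    ∑ S ∈ (Finset.univ : Finset (Fin k)).powerset,
      (if A ⊆ S then ((-1 : ℤ) ^ (k - S.card)) else 0)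
      = if A = Finset.univ then 1 else 0 := by
  rw [Finset.sum_ite, Finset.sum_const_zero, add_zero]
  have : Finset.filter (fun S => A ⊆ S) (Finset.univ : Finset (Fin k)).powerset
      = Finset.filter (fun S => A ⊆ S) (Finset.univ : Finset (Fin k)).powerset := rfl
  -- reindex by T = S \ A
  rw [show (Finset.univ : Finset (Fin k)).powerset.filter (fun S => A ⊆ S)
      = ((Finset.univ : Finset (Fin k)).powerset.filter (fun S => A ⊆ S)) from rfl]
  have hsum : ∑ S ∈ (Finset.univ : Finset (Fin k)).powerset.filter (fun S => A ⊆ S),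
      ((-1 : ℤ) ^ (k - S.card))
      = ∑ T ∈ Aᶜ.powerset, ((-1 : ℤ) ^ (k - (A ∪ T).card)) := by
    refine Finset.sum_nbij' (fun S => S \ A) (fun T => A ∪ T) ?_ ?_ ?_ ?_ ?_
    · intro S hS
      simp only [Finset.mem_filter, Finset.mem_powerset] at hS
      simp only [Finset.mem_powerset]
      intro x hx
      simp only [Finset.mem_sdiff] at hx
      simp [hx.2]
    · intro T hT
      simp only [Finset.mem_powerset] at hT
      simp only [Finset.mem_filter, Finset.mem_powerset]
      exact ⟨Finset.subset_univ _, Finset.subset_union_left⟩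
    · intro S hS
      simp only [Finset.mem_filter, Finset.mem_powerset] at hS
      exact Finset.union_sdiff_of_subset hS.2
    · intro T hT
      simp only [Finset.mem_powerset] at hT
      apply Finset.union_sdiff_cancel_left
      intro x hx1 hx2
      intro y hy
      have := hT (hx2 hy)
      simp only [Finset.mem_compl] at this
      exact absurd (hx1 hy) this
    · intro S hS
      simp only [Finset.mem_filter, Finset.mem_powerset] at hS
      rw [Finset.union_sdiff_of_subset hS.2]
  rw [hsum]
  have hdisj : ∀ T ∈ Aᶜ.powerset, (A ∪ T).card = A.card + T.card := by
    intro T hT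
    simp only [Finset.mem_powerset] at hT
    apply Finset.card_union_of_disjoint
    intro x hx1 hx2
    intro y hy
    have := hT (hx2 hy)
    simp only [Finset.mem_compl] at this
    exact absurd (hx1 hy) this
  have hcardc : Aᶜ.card = k - A.card := by
    have := Finset.card_compl A
    simpa using this
  have key : ∀ T ∈ Aᶜ.powerset,
      ((-1 : ℤ) ^ (k - (A ∪ T).card)) = (-1 : ℤ) ^ (Aᶜ.card) * (-1 : ℤ) ^ T.card := by
    intro T hT
    rw [hdisj T hT]
    have h1 : T.card ≤ Aᶜ.card := Finset.card_le_card (Finset.mem_powerset.1 hT)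
    have h2 : A.card ≤ k := by
      simpa using Finset.card_le_card (Finset.subset_univ A)
    have h3 : k - (A.card + T.card) = (Aᶜ.card - T.card) := by omega
    rw [h3]
    have h4 : (-1 : ℤ) ^ (Aᶜ.card - T.card) * (-1 : ℤ) ^ T.card = (-1 : ℤ) ^ Aᶜ.card := by
      rw [← pow_add]
      congr 1
      omega
    have h5 : ((-1 : ℤ) ^ T.card) * ((-1 : ℤ) ^ T.card) = 1 := by
      rw [← pow_add, Even.neg_one_pow ⟨T.card, rfl⟩]
    calc (-1 : ℤ) ^ (Aᶜ.card - T.card)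
        = (-1 : ℤ) ^ (Aᶜ.card - T.card) * (((-1 : ℤ) ^ T.card) * ((-1 : ℤ) ^ T.card)) := by
          rw [h5, mul_one]
      _ = (-1 : ℤ) ^ Aᶜ.card * (-1 : ℤ) ^ T.card := by rw [← mul_assoc, h4]
  rw [Finset.sum_congr rfl key, ← Finset.mul_sum, Finset.sum_powerset_neg_one_pow_card]
  by_cases hA : A = Finset.univ
  · simp [hA]
  · have : Aᶜ ≠ ∅ := by
      simp only [ne_eq, Finset.compl_eq_empty_iff]
      exact hA
    simp [this, hA]

private lemma polarization {k : ℕ} {E F : Type*} [AddCommGroup E] [Module ℂ E]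
    [AddCommGroup F] [Module ℂ F]
    (p : MultilinearMap ℂ (fun _ : Fin k => E) F) (v : Fin k → E) :
    ∑ S ∈ (Finset.univ : Finset (Fin k)).powerset,
        (-1 : ℤ) ^ (k - S.card) • p (fun _ => ∑ j ∈ S, v j)
      = ∑ σ : Equiv.Perm (Fin k), p (fun i => v (σ i)) := by
  classical
  have expand : ∀ S : Finset (Fin k),
      p (fun _ => ∑ j ∈ S, v j) = ∑ r ∈ Fintype.piFinset (fun _ : Fin k => S),
        p (fun i => v (r i)) := by
    intro S
    exact p.map_sum_finset (fun _ j => v j) (fun _ => S)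
  calc
    ∑ S ∈ (Finset.univ : Finset (Fin k)).powerset,
        (-1 : ℤ) ^ (k - S.card) • p (fun _ => ∑ j ∈ S, v j)
      = ∑ S ∈ (Finset.univ : Finset (Fin k)).powerset,
          ∑ r ∈ (Finset.univ : Finset (Fin k → Fin k)),
            (if (Finset.image r Finset.univ) ⊆ S then
              ((-1 : ℤ) ^ (k - S.card)) • p (fun i => v (r i)) else 0) := by
        refine Finset.sum_congr rfl fun S _ => ?_
        rw [expand S, Finset.smul_sum]
        rw [Finset.sum_ite, Finset.sum_const_zero, add_zero]
        apply Finset.sum_nbij' (fun r => r) (fun r => r)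
        · intro r hr
          simp only [Fintype.mem_piFinset] at hr
          simp only [Finset.mem_filter, Finset.mem_univ, true_and]
          rw [Finset.image_subset_iff]
          intro i _
          exact hr i
        · intro r hr
          simp only [Finset.mem_filter, Finset.mem_univ, true_and] at hr
          rw [Finset.image_subset_iff] at hr
          simp only [Fintype.mem_piFinset]
          intro i
          exact hr i (Finset.mem_univ i)
        · intro r _; rfl
        · intro r _; rfl
        · intro r _; rfl
    _ = ∑ r ∈ (Finset.univ : Finset (Fin k → Fin k)),
          (∑ S ∈ (Finset.univ : Finset (Fin k)).powerset,
            (if (Finset.image r Finset.univ) ⊆ S then ((-1 : ℤ) ^ (k - S.card)) else 0))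
              • p (fun i => v (r i)) := by
        rw [Finset.sum_comm]
        refine Finset.sum_congr rfl fun r _ => ?_
        rw [Finset.sum_smul]
        refine Finset.sum_congr rfl fun S _ => ?_
        by_cases h : (Finset.image r Finset.univ) ⊆ S <;> simp [h]
    _ = ∑ r ∈ (Finset.univ : Finset (Fin k → Fin k)),
          (if (Finset.image r Finset.univ) = Finset.univ then (1 : ℤ) else 0)
            • p (fun i => v (r i)) := by
        refine Finset.sum_congr rfl fun r _ => ?_
        rw [alt_sum_superset]
    _ = ∑ r ∈ (Finset.univ : Finset (Fin k → Fin k)).filter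
          (fun r => Finset.image r Finset.univ = Finset.univ), p (fun i => v (r i)) := by
        rw [Finset.sum_filter]
        refine Finset.sum_congr rfl fun r _ => ?_
        by_cases h : Finset.image r Finset.univ = Finset.univ <;> simp [h]
    _ = ∑ σ : Equiv.Perm (Fin k), p (fun i => v (σ i)) := by
        symm
        have hsurj : ∀ r : Fin k → Fin k, Finset.image r Finset.univ = Finset.univ →
            Function.Bijective r := by
          intro r hr
          have hs : Function.Surjective r := by
            intro y
            have : y ∈ Finset.image r Finset.univ := by rw [hr]; exact Finset.mem_univ y
            rcases Finset.mem_image.1 this with ⟨x, _, hx⟩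
            exact ⟨x, hx⟩
          exact ⟨Finite.injective_iff_surjective.2 hs, hs⟩
        refine Finset.sum_bij' (fun (σ : Equiv.Perm (Fin k)) _ => (σ : Fin k → Fin k))
          (fun r hr => Equiv.ofBijective r (hsurj r (by simpa using hr))) ?_ ?_ ?_ ?_ ?_
        · intro σ _
          simp only [Finset.mem_filter, Finset.mem_univ, true_and]
          ext y
          simp only [Finset.mem_image, Finset.mem_univ, true_and, iff_true]
          exact ⟨σ.symm y, by simp⟩
        · intro r hr
          exact Finset.mem_univ _
        · intro σ _
          ext x
          simp
        · intro r hr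
          rfl
        · intro σ _
          rfl

section sym
variable {E : Type*} [NormedAddCommGroup E] [NormedSpace ℂ E]

private noncomputable def symPart {k : ℕ}
    (p : ContinuousMultilinearMap ℂ (fun _ : Fin k => E) ℂ) :
    ContinuousMultilinearMap ℂ (fun _ : Fin k => E) ℂ :=
  (k.factorial : ℝ)⁻¹ • ∑ σ : Equiv.Perm (Fin k), p.domDomCongr σ

private lemma symPart_diag {k : ℕ}
    (p : ContinuousMultilinearMap ℂ (fun _ : Fin k => E) ℂ) (y : E) :
    symPart p (fun _ => y) = p (fun _ => y) := by
  have h1 : (∑ σ : Equiv.Perm (Fin k), p.domDomCongr σ) (fun _ => y)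
      = (Fintype.card (Equiv.Perm (Fin k))) • p (fun _ => y) := by
    rw [ContinuousMultilinearMap.sum_apply]
    rw [Finset.sum_congr rfl (fun σ _ => by
      rw [ContinuousMultilinearMap.domDomCongr_apply])]
    simp [Finset.sum_const, Finset.card_univ]
  simp only [symPart, ContinuousMultilinearMap.smul_apply, h1]
  rw [Fintype.card_perm, Fintype.card_fin]
  rw [← Nat.cast_smul_eq_nsmul ℝ]
  rw [inv_smul_smul₀ (by exact_mod_cast k.factorial_ne_zero)]

private lemma symPart_norm_le {k : ℕ}
    (p : ContinuousMultilinearMap ℂ (fun _ : Fin k => E) ℂ) {C : ℝ} (hC : 0 ≤ C)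
    (hdiag : ∀ u : E, ‖p (fun _ => u)‖ ≤ C * ‖u‖ ^ k) :
    ‖symPart p‖ ≤ C * (2 * k) ^ k / k.factorial := by
  have hkfac : (0 : ℝ) < k.factorial := by exact_mod_cast k.factorial_pos
  apply ContinuousMultilinearMap.opNorm_le_bound
  · positivity
  intro v
  by_cases h0 : ∃ i, v i = 0
  · rcases h0 with ⟨i, hi⟩
    have h1 : symPart p v = 0 := by
      simp only [symPart, ContinuousMultilinearMap.smul_apply,
        ContinuousMultilinearMap.sum_apply]
      have hzero : ∀ σ : Equiv.Perm (Fin k),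
          (ContinuousMultilinearMap.domDomCongr σ p) v = 0 := by
        intro σ
        exact p.toMultilinearMap.map_coord_zero (m := fun j => v (σ j)) (σ.symm i)
          (by simp [hi])
      rw [Finset.sum_congr rfl (fun σ _ => hzero σ)]
      simp
    rw [h1]
    have h2 : ∏ j, ‖v j‖ = 0 := Finset.prod_eq_zero (Finset.mem_univ i) (by simp [hi])
    rw [h2, norm_zero, mul_zero]
  · push_neg at h0
    set c : Fin k → ℂ := fun i => (‖v i‖ : ℂ) with hc
    set w : Fin k → E := fun i => ((‖v i‖ : ℂ))⁻¹ • v i with hw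
    have hcne : ∀ i, c i ≠ 0 := by
      intro i
      simp [hc, norm_eq_zero, h0 i]
    have hvw : (fun i => c i • w i) = v := by
      funext i
      simp only [hw, hc]
      rw [smul_inv_smul₀ (hcne i)]
    have hcnorm : ∀ i, ‖c i‖ = ‖v i‖ := by
      intro i
      simp only [hc]
      rw [Complex.norm_real, norm_norm]
    have hwnorm : ∀ i, ‖w i‖ = 1 := by
      intro i
      simp only [hw]
      rw [norm_smul, norm_inv]
      have h1 : ‖((‖v i‖ : ℝ) : ℂ)‖ = ‖v i‖ := by
        rw [Complex.norm_real, norm_norm]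
      rw [h1, inv_mul_cancel₀ (norm_ne_zero_iff.2 (h0 i))]
    -- bound for the permutation sum at w
    have bound : ‖∑ σ : Equiv.Perm (Fin k), p (fun i => w (σ i))‖ ≤ C * (2 * k) ^ k := by
      have hpol : (∑ σ : Equiv.Perm (Fin k), p fun i => w (σ i))
          = ∑ S ∈ (Finset.univ : Finset (Fin k)).powerset,
              (-1 : ℤ) ^ (k - S.card) • (p (fun _ => ∑ j ∈ S, w j)) :=
        (polarization p.toMultilinearMap w).symm
      rw [hpol]
      refine (norm_sum_le _ _).trans ?_
      have each : ∀ S ∈ (Finset.univ : Finset (Fin k)).powerset,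
          ‖(-1 : ℤ) ^ (k - S.card) • (p (fun _ => ∑ j ∈ S, w j))‖
            ≤ C * (k : ℝ) ^ k := by
        intro S _
        have h2 : ‖(-1 : ℤ) ^ (k - S.card) • (p (fun _ => ∑ j ∈ S, w j))‖
            = ‖p (fun _ => ∑ j ∈ S, w j)‖ := by
          rw [zsmul_eq_mul, norm_mul]
          have h3 : ‖(((-1 : ℤ) ^ (k - S.card) : ℤ) : ℂ)‖ = 1 := by
            push_cast
            rw [norm_pow, norm_neg, norm_one, one_pow]
          rw [h3, one_mul]
        rw [h2]
        refine (hdiag _).trans ?_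
        have hn : ‖∑ j ∈ S, w j‖ ≤ (k : ℝ) := by
          refine (norm_sum_le _ _).trans ?_
          rw [Finset.sum_congr rfl (fun j _ => hwnorm j)]
          simp only [Finset.sum_const, nsmul_eq_mul, mul_one]
          exact_mod_cast Finset.card_le_card (Finset.subset_univ S) |>.trans
            (by simp [Finset.card_univ])
        have h4 := pow_le_pow_left₀ (norm_nonneg _) hn k
        nlinarith [pow_nonneg (norm_nonneg (∑ j ∈ S, w j)) k]
      refine (Finset.sum_le_sum each).trans ?_
      rw [Finset.sum_const, Finset.card_powerset, Finset.card_univ, Fintype.card_fin]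
      simp only [nsmul_eq_mul]
      rw [mul_pow]
      push_cast
      ring_nf
      nlinarith [pow_nonneg (Nat.cast_nonneg (α := ℝ) k) k, hC,
        pow_pos (by norm_num : (0:ℝ) < 2) k]
    -- assemble
    have happ : symPart p v = (k.factorial : ℝ)⁻¹ •
        ((∏ i, c i) • ∑ σ : Equiv.Perm (Fin k), p (fun i => w (σ i))) := by
      simp only [symPart, ContinuousMultilinearMap.smul_apply,
        ContinuousMultilinearMap.sum_apply]
      congr 1
      rw [Finset.smul_sum]
      refine Finset.sum_congr rfl fun σ _ => ?_
      have h5 : (p.domDomCongr σ) v = p (fun i => v (σ i)) := rfl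
      rw [h5]
      conv_lhs => rw [← hvw]
      have h6 : p (fun i => c (σ i) • w (σ i))
          = (∏ i, c (σ i)) • p (fun i => w (σ i)) :=
        p.map_smul_univ (fun i => c (σ i)) (fun i => w (σ i))
      rw [h6]
      congr 1
      exact Equiv.prod_comp σ c
    rw [happ]
    rw [norm_smul, norm_smul]
    have h7 : ‖(k.factorial : ℝ)⁻¹‖ = (k.factorial : ℝ)⁻¹ := by
      rw [Real.norm_eq_abs, abs_of_pos (by positivity)]
    have h8 : ‖∏ i, c i‖ = ∏ i, ‖v i‖ := by
      rw [norm_prod]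
      exact Finset.prod_congr rfl fun i _ => hcnorm i
    rw [h7, h8]
    have h9 : (0:ℝ) ≤ ∏ i, ‖v i‖ := Finset.prod_nonneg fun i _ => norm_nonneg _
    calc (k.factorial : ℝ)⁻¹ * ((∏ i, ‖v i‖) *
          ‖∑ σ : Equiv.Perm (Fin k), p (fun i => w (σ i))‖)
        ≤ (k.factorial : ℝ)⁻¹ * ((∏ i, ‖v i‖) * (C * (2 * k) ^ k)) := by
          apply mul_le_mul_of_nonneg_left _ (by positivity)
          exact mul_le_mul_of_nonneg_left bound h9
      _ = C * (2 * ↑k) ^ k / ↑k.factorial * ∏ i, ‖v i‖ := by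
          field_simp

end sym

private lemma fac_bound (k : ℕ) : (2 * (k:ℝ)) ^ k / k.factorial ≤ 6 ^ k := by
  have h1 : (k:ℝ) ^ k / k.factorial ≤ Real.exp k := by
    have h2 := Real.sum_le_exp_of_nonneg (x := (k:ℝ)) (by positivity) (k+1)
    refine le_trans ?_ h2
    have h3 : (k:ℝ) ^ k / k.factorial = ∑ i ∈ Finset.range (k+1),
        (if i = k then (k:ℝ) ^ i / i.factorial else 0) := by
      rw [Finset.sum_ite_eq' _ k]
      simp
    rw [h3]
    refine Finset.sum_le_sum fun i _ => ?_
    by_cases h : i = k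
    · simp [h]
    · simp only [h, if_false]
      positivity
  have h4 : Real.exp k ≤ 3 ^ k := by
    have : Real.exp k = Real.exp 1 ^ k := by
      rw [← Real.exp_nat_mul]; norm_num
    rw [this]
    exact pow_le_pow_left₀ (Real.exp_pos 1).le
      (le_of_lt (lt_of_lt_of_le Real.exp_one_lt_d9 (by norm_num))) k
  have hkfac : (0:ℝ) < k.factorial := by exact_mod_cast k.factorial_pos
  have h5 : (2 * (k:ℝ)) ^ k / k.factorial = 2 ^ k * ((k:ℝ) ^ k / k.factorial) := by
    rw [mul_pow]; ring
  rw [h5]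
  calc (2:ℝ) ^ k * ((k:ℝ) ^ k / k.factorial) ≤ 2 ^ k * 3 ^ k := by
        apply mul_le_mul_of_nonneg_left (h1.trans h4) (by positivity)
    _ = 6 ^ k := by rw [← mul_pow]; norm_num

section euclid

variable {n : ℕ}

private lemma exists_unit_orth (hn : 2 ≤ n) (z : EuclideanSpace ℂ (Fin n)) (hz : z ≠ 0) :
    ∃ u : EuclideanSpace ℂ (Fin n), ‖u‖ = 1 ∧ inner ℂ z u = (0 : ℂ) := by
  set K : Submodule ℂ (EuclideanSpace ℂ (Fin n)) := ℂ ∙ z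
  have hK : Module.finrank ℂ K = 1 := finrank_span_singleton hz
  have horth : 0 < Module.finrank ℂ Kᗮ := by
    have := Submodule.finrank_add_finrank_orthogonal K
    rw [hK, finrank_euclideanSpace_fin] at this
    omega
  obtain ⟨u₀, hu₀mem, hu₀ne⟩ : ∃ u₀ ∈ Kᗮ, u₀ ≠ 0 := by
    have : Nontrivial Kᗮ := Module.nontrivial_of_finrank_pos horth
    obtain ⟨x, hx⟩ := exists_ne (0 : Kᗮ)
    exact ⟨(x : EuclideanSpace ℂ (Fin n)), x.2, by simpa using hx⟩
  refine ⟨((‖u₀‖ : ℂ))⁻¹ • u₀, ?_, ?_⟩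
  · rw [norm_smul, norm_inv, Complex.norm_real, norm_norm,
      inv_mul_cancel₀ (norm_ne_zero_iff.2 hu₀ne)]
  · rw [inner_smul_right]
    have : inner ℂ z u₀ = (0 : ℂ) :=
      (Submodule.mem_orthogonal K u₀).1 hu₀mem z (Submodule.mem_span_singleton_self z)
    rw [this, mul_zero]

private lemma bounded_near_zero (hn : 2 ≤ n) {f : EuclideanSpace ℂ (Fin n) → ℂ}
    (hf : AnalyticOnNhd ℂ f (ball (0 : EuclideanSpace ℂ (Fin n)) 1 \ {0})) :
    ∃ M : ℝ, 0 ≤ M ∧ ∀ z : EuclideanSpace ℂ (Fin n),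
      z ≠ 0 → ‖z‖ ≤ 47/100 → ‖f z‖ ≤ M := by
  set K : Set (EuclideanSpace ℂ (Fin n)) :=
    closedBall 0 (97/100) \ ball 0 (1/2) with hKdef
  have hKcompact : IsCompact K := (isCompact_closedBall _ _).diff isOpen_ball
  have hKsub : K ⊆ ball (0 : EuclideanSpace ℂ (Fin n)) 1 \ {0} := by
    intro x hx
    rcases hx with ⟨hx1, hx2⟩
    rw [mem_closedBall_zero_iff] at hx1
    rw [Metric.mem_ball, dist_zero_right] at hx2
    push_neg at hx2
    constructor
    · rw [mem_ball_zero_iff]; linarith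
    · simp only [Set.mem_singleton_iff]
      intro h
      rw [h, norm_zero] at hx2
      linarith
  obtain ⟨C, hC⟩ := hKcompact.exists_bound_of_continuousOn
    ((hf.continuousOn).mono hKsub)
  refine ⟨max C 0, le_max_right _ _, ?_⟩
  intro z hz hznorm
  obtain ⟨u, hu1, huorth⟩ := exists_unit_orth hn z hz
  set φ : ℂ → ℂ := fun ζ => f (z + ζ • u) with hφ
  have hmem : ∀ ζ : ℂ, ‖ζ‖ < 51/100 →
      z + ζ • u ∈ ball (0 : EuclideanSpace ℂ (Fin n)) 1 \ {0} := by
    intro ζ hζ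
    constructor
    · rw [mem_ball_zero_iff]
      calc ‖z + ζ • u‖ ≤ ‖z‖ + ‖ζ • u‖ := norm_add_le _ _
        _ = ‖z‖ + ‖ζ‖ := by rw [norm_smul, hu1, mul_one]
        _ < 1 := by linarith
    · simp only [Set.mem_singleton_iff]
      intro h
      have h1 : inner ℂ z (z + ζ • u) = (0:ℂ) := by rw [h, inner_zero_right]
      rw [inner_add_right, inner_smul_right, huorth, mul_zero, add_zero] at h1
      exact hz (inner_self_eq_zero.1 h1)
  have hdiff : DifferentiableOn ℂ φ (ball (0:ℂ) (51/100)) := by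
    intro ζ hζ
    rw [mem_ball_zero_iff] at hζ
    have h1 : AnalyticAt ℂ φ ζ := by
      have haff : AnalyticAt ℂ (fun ζ : ℂ => z + ζ • u) ζ :=
        analyticAt_const.add ((ContinuousLinearMap.toSpanSingleton ℂ u).analyticAt ζ)
      have h2 : AnalyticAt ℂ (f ∘ (fun ζ : ℂ => z + ζ • u)) ζ :=
        AnalyticAt.comp (g := f) (f := fun ζ : ℂ => z + ζ • u) (x := ζ)
          (hf _ (hmem ζ hζ)) haff
      exact h2
    exact h1.differentiableAt.differentiableWithinAt
  have hcl : DiffContOnCl ℂ φ (ball (0:ℂ) (1/2)) := by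
    constructor
    · exact hdiff.mono (ball_subset_ball (by norm_num))
    · refine (hdiff.continuousOn).mono ?_
      rw [closure_ball (0:ℂ) (by norm_num : (1/2 : ℝ) ≠ 0)]
      intro x hx
      rw [mem_closedBall_zero_iff] at hx
      rw [mem_ball_zero_iff]
      linarith
  have hfr : ∀ ζ ∈ frontier (ball (0:ℂ) (1/2)), ‖φ ζ‖ ≤ max C 0 := by
    intro ζ hζ
    rw [frontier_ball (0:ℂ) (by norm_num : (1/2 : ℝ) ≠ 0)] at hζ
    rw [mem_sphere_zero_iff_norm] at hζ
    have hwK : z + ζ • u ∈ K := by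
      have hsq : ‖z + ζ • u‖ ^ 2 = ‖z‖ ^ 2 + ‖ζ‖ ^ 2 := by
        rw [norm_add_sq (𝕜 := ℂ)]
        rw [inner_smul_right, huorth, mul_zero]
        simp [norm_smul, hu1]
      constructor
      · rw [mem_closedBall_zero_iff]
        calc ‖z + ζ • u‖ ≤ ‖z‖ + ‖ζ • u‖ := norm_add_le _ _
          _ = ‖z‖ + ‖ζ‖ := by rw [norm_smul, hu1, mul_one]
          _ ≤ 97/100 := by rw [hζ]; linarith
      · rw [Metric.mem_ball, dist_zero_right]
        push_neg
        nlinarith [norm_nonneg (z + ζ • u), hζ, hsq, norm_nonneg z]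
    calc ‖φ ζ‖ ≤ C := hC _ hwK
      _ ≤ max C 0 := le_max_left _ _
  have h0cl : (0:ℂ) ∈ closure (ball (0:ℂ) (1/2)) :=
    subset_closure (mem_ball_self (by norm_num))
  have := Complex.norm_le_of_forall_mem_frontier_norm_le isBounded_ball hcl hfr h0cl
  simpa [hφ] using this

end euclid

private lemma ball_diff_pt_isPathConnected {F : Type*} [NormedAddCommGroup F]
    [NormedSpace ℝ F] (hrank : 1 < Module.rank ℝ F) {c x : F} {R : ℝ}
    (hne : (ball c R \ {x}).Nonempty) :
    IsPathConnected (ball c R \ {x}) := by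
  obtain ⟨a₀, ha₀⟩ := hne
  refine ⟨a₀, ha₀, ?_⟩
  -- it suffices to show any two points are joined; prove a symmetric claim
  suffices H : ∀ a b : F, a ∈ ball c R \ {x} → b ∈ ball c R \ {x} →
      JoinedIn (ball c R \ {x}) a b by
    intro b hb; exact H a₀ b ha₀ hb
  intro a b ha hb
  rcases eq_or_ne a b with rfl | hab
  · exact JoinedIn.refl ha
  have hax : a ≠ x := ha.2
  have hbx : b ≠ x := hb.2
  set c' := (2:ℝ)⁻¹ • (a + b) with hc'
  set x' := (2:ℝ)⁻¹ • (b - a) with hx'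
  have Ia : c' - x' = a := by rw [hc', hx']; module
  have Ib : c' + x' = b := by rw [hc', hx']; module
  have hx'ne : x' ≠ 0 := by
    rw [hx']
    simp only [ne_eq, smul_eq_zero, sub_eq_zero]
    push_neg
    exact ⟨by norm_num, fun h => hab h.symm⟩
  obtain ⟨y, hy⟩ := exists_linearIndependent_pair_of_one_lt_rank hrank hx'ne
  have hyne : y ≠ 0 := by
    intro h
    have := hy.ne_zero 1
    simp [h] at this
  -- countable bad sets
  have A : Set.Countable {t : ℝ | (segment ℝ (c' + x') (c' + t • y) ∩ {x}).Nonempty} := by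
    apply countable_setOf_nonempty_of_disjoint _ (fun t => Set.inter_subset_right)
      (countable_singleton x)
    intro t t' htt'
    apply disjoint_iff_inter_eq_empty.2
    have N : ({c' + x'} : Set F) ∩ {x} = ∅ := by
      rw [Ib]
      simp only [Set.singleton_inter_eq_empty, Set.mem_singleton_iff]
      exact fun h => hbx h
    rw [Set.inter_assoc, Set.inter_comm {x}, Set.inter_assoc, Set.inter_self, ← Set.inter_assoc,
      ← Set.subset_empty_iff, ← N]
    apply Set.inter_subset_inter_left
    exact Eq.subset (segment_inter_eq_endpoint_of_linearIndependent_of_ne hy htt'.symm c')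
  have B : Set.Countable {t : ℝ | (segment ℝ (c' - x') (c' + t • y) ∩ {x}).Nonempty} := by
    apply countable_setOf_nonempty_of_disjoint _ (fun t => Set.inter_subset_right)
      (countable_singleton x)
    intro t t' htt'
    apply disjoint_iff_inter_eq_empty.2
    have N : ({c' - x'} : Set F) ∩ {x} = ∅ := by
      rw [Ia]
      simp only [Set.singleton_inter_eq_empty, Set.mem_singleton_iff]
      exact fun h => hax h
    rw [Set.inter_assoc, Set.inter_comm {x}, Set.inter_assoc, Set.inter_self, ← Set.inter_assoc,
      ← Set.subset_empty_iff, ← N]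
    apply Set.inter_subset_inter_left
    rw [sub_eq_add_neg _ x']
    refine Eq.subset (segment_inter_eq_endpoint_of_linearIndependent_of_ne ?_ htt'.symm c')
    convert hy.units_smul ![-1, 1]
    simp [← List.ofFn_inj]
    rfl
  have C0 : Set.Countable {t : ℝ | c' + t • y = x} := by
    apply Set.Subsingleton.countable
    intro t ht t' ht'
    simp only [Set.mem_setOf_eq] at ht ht'
    have : t • y = t' • y := by
      have := ht.trans ht'.symm
      exact add_left_cancel this
    have h2 : (t - t') • y = 0 := by
      rw [sub_smul, this, sub_self]
    rcases smul_eq_zero.1 h2 with h | h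
    · linarith [sub_eq_zero.1 (by linarith [h] : t - t' = 0)]
    · exact absurd h hyne
  -- c' is in the ball
  have hc'mem : c' ∈ ball c R := by
    have := convex_ball c R ha.1 hb.1 (by norm_num : (0:ℝ) ≤ 2⁻¹)
      (by norm_num : (0:ℝ) ≤ 2⁻¹) (by norm_num)
    simpa [hc', smul_add] using this
  -- small t keeps c' + t • y in the ball
  have hopen : IsOpen {t : ℝ | c' + t • y ∈ ball c R} :=
    isOpen_ball.preimage (continuous_const.add (continuous_id.smul continuous_const))
  have h0mem : (0:ℝ) ∈ {t : ℝ | c' + t • y ∈ ball c R} := by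
    simp only [Set.mem_setOf_eq, zero_smul, add_zero]
    exact hc'mem
  obtain ⟨δ, hδpos, hδ⟩ := Metric.isOpen_iff.1 hopen 0 h0mem
  -- choose a good t
  have hbad : Set.Countable ({t : ℝ | (segment ℝ (c' + x') (c' + t • y) ∩ {x}).Nonempty}
      ∪ {t : ℝ | (segment ℝ (c' - x') (c' + t • y) ∩ {x}).Nonempty}
      ∪ {t : ℝ | c' + t • y = x}) := (A.union B).union C0
  have hIoo : (Set.Ioo (-δ) δ).Nonempty := ⟨0, by constructor <;> linarith⟩
  obtain ⟨t, htbad, htIoo⟩ :=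
    (hbad.dense_compl ℝ).exists_mem_open isOpen_Ioo hIoo
  have h1 := htbad
  rw [Set.mem_compl_iff, Set.mem_union, Set.mem_union] at h1
  push_neg at h1
  obtain ⟨⟨hA', hB'⟩, hC'⟩ := h1
  rw [Set.mem_setOf_eq, Set.not_nonempty_iff_eq_empty] at hA' hB'
  set z := c' + t • y with hz
  have hzball : z ∈ ball c R := by
    apply hδ
    rw [Metric.mem_ball, Real.dist_eq, sub_zero]
    rw [Set.mem_Ioo] at htIoo
    rw [abs_lt]
    exact ⟨htIoo.1, htIoo.2⟩
  have hzx : z ≠ x := hC'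
  have JB : JoinedIn (ball c R \ {x}) b z := by
    apply JoinedIn.of_segment_subset
    intro w hw
    constructor
    · exact (convex_ball c R).segment_subset hb.1 hzball hw
    · simp only [Set.mem_singleton_iff]
      intro hwx
      have : w ∈ segment ℝ (c' + x') (c' + t • y) ∩ {x} := by
        constructor
        · rw [Ib]; exact hw
        · simp [hwx]
      rw [hA'] at this
      exact this
  have JA : JoinedIn (ball c R \ {x}) a z := by
    apply JoinedIn.of_segment_subset
    intro w hw
    constructor
    · exact (convex_ball c R).segment_subset ha.1 hzball hw
    · simp only [Set.mem_singleton_iff]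
      intro hwx
      have : w ∈ segment ℝ (c' - x') (c' + t • y) ∩ {x} := by
        constructor
        · rw [Ia]; exact hw
        · simp [hwx]
      rw [hB'] at this
      exact this
  exact JA.trans JB.symm

private lemma diag_coeff_bound {f : EuclideanSpace ℂ (Fin n) → ℂ}
    (hfN : AnalyticOnNhd ℂ f (ball (0 : EuclideanSpace ℂ (Fin n)) 1 \ {0}))
    {M : ℝ} (hM0 : 0 ≤ M)
    (hMb : ∀ z : EuclideanSpace ℂ (Fin n), z ≠ 0 → ‖z‖ ≤ 47/100 → ‖f z‖ ≤ M)
    {z₀ : EuclideanSpace ℂ (Fin n)} (hz₀ : ‖z₀‖ = 1/100)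
    {p : FormalMultilinearSeries ℂ (EuclideanSpace ℂ (Fin n)) ℂ} {r₀ : ℝ≥0∞}
    (hpb : HasFPowerSeriesOnBall f p z₀ r₀)
    (v : EuclideanSpace ℂ (Fin n)) (hv : ‖v‖ = 1) (k : ℕ) :
    ‖p k (fun _ => v)‖ ≤ M * (20/9) ^ k := by
  classical
  have hvne : v ≠ 0 := by
    intro h; rw [h, norm_zero] at hv; norm_num at hv
  set φ : ℂ → ℂ := fun t => f (z₀ + t • v) with hφdef
  have hz₀ne : z₀ ≠ 0 := by
    intro h; rw [h, norm_zero] at hz₀; norm_num at hz₀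
  -- membership of slice points
  have hmem : ∀ t : ℂ, ‖t‖ < 46/100 → z₀ + t • v ≠ 0 →
      z₀ + t • v ∈ ball (0 : EuclideanSpace ℂ (Fin n)) 1 \ {0} := by
    intro t ht hne
    refine ⟨?_, by simpa using hne⟩
    rw [mem_ball_zero_iff]
    calc ‖z₀ + t • v‖ ≤ ‖z₀‖ + ‖t • v‖ := norm_add_le _ _
      _ = 1/100 + ‖t‖ := by rw [hz₀, norm_smul, hv, mul_one]
      _ < 1 := by linarith
  have hnorm47 : ∀ t : ℂ, ‖t‖ < 46/100 → ‖z₀ + t • v‖ ≤ 47/100 := by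
    intro t ht
    calc ‖z₀ + t • v‖ ≤ ‖z₀‖ + ‖t • v‖ := norm_add_le _ _
      _ = 1/100 + ‖t‖ := by rw [hz₀, norm_smul, hv, mul_one]
      _ ≤ 47/100 := by linarith
  have hφan : ∀ t : ℂ, z₀ + t • v ≠ 0 → ‖t‖ < 46/100 → AnalyticAt ℂ φ t := by
    intro t hne ht
    have haff : AnalyticAt ℂ (fun s : ℂ => z₀ + s • v) t :=
      analyticAt_const.add ((ContinuousLinearMap.toSpanSingleton ℂ v).analyticAt t)
    have h2 : AnalyticAt ℂ (f ∘ (fun s : ℂ => z₀ + s • v)) t :=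
      AnalyticAt.comp (g := f) (f := fun s : ℂ => z₀ + s • v) (x := t)
        (hfN _ (hmem t ht hne)) haff
    exact h2
  -- construct extension ψ of φ to the whole disk, bounded by M
  obtain ⟨ψ, hψd, hψb, hψφ⟩ : ∃ ψ : ℂ → ℂ,
      DifferentiableOn ℂ ψ (ball (0:ℂ) (46/100)) ∧
      (∀ t ∈ ball (0:ℂ) (46/100), ‖ψ t‖ ≤ M) ∧ ψ =ᶠ[nhds (0:ℂ)] φ := by
    by_cases hT : ∃ t : ℂ, z₀ + t • v = 0
    · obtain ⟨t₀, ht₀⟩ := hT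
      have ht₀norm : ‖t₀‖ = 1/100 := by
        have h1 : t₀ • v = -z₀ := by
          have := ht₀; linear_combination (norm := module) this
        have h2 : ‖t₀ • v‖ = ‖z₀‖ := by rw [h1, norm_neg]
        rw [norm_smul, hv, mul_one] at h2
        rw [h2, hz₀]
      have huniq : ∀ t : ℂ, z₀ + t • v = 0 → t = t₀ := by
        intro t ht
        have h1 : (t - t₀) • v = 0 := by
          rw [sub_smul]
          have := ht.trans ht₀.symm
          have h2 : t • v = t₀ • v := by linear_combination (norm := module) this
          rw [h2, sub_self]
        rcases smul_eq_zero.1 h1 with h | h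
        · exact sub_eq_zero.1 h
        · exact absurd h hvne
      have ht₀mem : t₀ ∈ ball (0:ℂ) (46/100) := by
        rw [mem_ball_zero_iff, ht₀norm]; norm_num
      have hd : DifferentiableOn ℂ φ (ball (0:ℂ) (46/100) \ {t₀}) := by
        intro t ht
        rcases ht with ⟨ht1, ht2⟩
        rw [mem_ball_zero_iff] at ht1
        simp only [Set.mem_singleton_iff] at ht2
        have hne : z₀ + t • v ≠ 0 := fun h => ht2 (huniq t h)
        exact ((hφan t hne ht1).differentiableAt).differentiableWithinAt
      have hbdd : ∀ t, t ∈ ball (0:ℂ) (46/100) \ {t₀} → ‖φ t‖ ≤ M := by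
        intro t ht
        rcases ht with ⟨ht1, ht2⟩
        rw [mem_ball_zero_iff] at ht1
        simp only [Set.mem_singleton_iff] at ht2
        have hne : z₀ + t • v ≠ 0 := fun h => ht2 (huniq t h)
        exact hMb _ hne (hnorm47 t ht1)
      have hb : BddAbove (norm ∘ φ '' (ball (0:ℂ) (46/100) \ {t₀})) := by
        refine ⟨M, ?_⟩
        rintro y ⟨t, ht, rfl⟩
        exact hbdd t ht
      have hψd : DifferentiableOn ℂ
          (Function.update φ t₀ (Filter.limUnder (nhdsWithin t₀ {t₀}ᶜ) φ))
          (ball (0:ℂ) (46/100)) :=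
        Complex.differentiableOn_update_limUnder_of_bddAbove
          (isOpen_ball.mem_nhds ht₀mem) hd hb
      set ψ := Function.update φ t₀ (Filter.limUnder (nhdsWithin t₀ {t₀}ᶜ) φ) with hψdef
      refine ⟨ψ, hψd, ?_, ?_⟩
      · intro t ht
        rcases eq_or_ne t t₀ with rfl | htne
        · -- bound at the singular point by continuity
          have hcont : ContinuousAt ψ t :=
            (hψd.differentiableAt (isOpen_ball.mem_nhds ht)).continuousAt
          have htend : Filter.Tendsto ψ (nhdsWithin t {t}ᶜ) (nhds (ψ t)) :=
            hcont.continuousWithinAt.tendsto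
          refine le_of_tendsto htend.norm ?_
          have hball : ball (0:ℂ) (46/100) ∩ {t}ᶜ ∈ nhdsWithin t {t}ᶜ :=
            Filter.inter_mem (mem_nhdsWithin_of_mem_nhds (isOpen_ball.mem_nhds ht))
              self_mem_nhdsWithin
          filter_upwards [hball] with s hs
          have hs2 : s ∈ ball (0:ℂ) (46/100) \ {t} := ⟨hs.1, hs.2⟩
          have : ψ s = φ s := Function.update_of_ne hs.2 _ _
          rw [this]
          exact hbdd s hs2
        · have : ψ t = φ t := Function.update_of_ne htne _ _
          rw [this]
          exact hbdd t ⟨ht, htne⟩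
      · have hball : ball (0:ℂ) (1/100) ∈ nhds (0:ℂ) :=
          isOpen_ball.mem_nhds (mem_ball_self (by norm_num))
        filter_upwards [hball] with t ht
        rw [mem_ball_zero_iff] at ht
        have : t ≠ t₀ := by
          intro h; rw [h, ht₀norm] at ht; norm_num at ht
        exact Function.update_of_ne this _ _
    · push_neg at hT
      refine ⟨φ, ?_, ?_, Filter.EventuallyEq.rfl⟩
      · intro t ht
        rw [mem_ball_zero_iff] at ht
        exact ((hφan t (hT t) ht).differentiableAt).differentiableWithinAt
      · intro t ht
        rw [mem_ball_zero_iff] at ht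
        exact hMb _ (hT t) (hnorm47 t ht)
  -- Cauchy power series of ψ on the disk of radius 9/20
  have hψd' : DifferentiableOn ℂ ψ (closedBall (0:ℂ) ((9/20 : ℝ≥0) : ℝ)) := by
    apply hψd.mono
    apply closedBall_subset_ball
    norm_num
  have hc : HasFPowerSeriesOnBall ψ (cauchyPowerSeries ψ 0 (9/20)) 0 ((9/20 : ℝ≥0) : ℝ≥0∞) :=
    hψd'.hasFPowerSeriesOnBall (by norm_num)
  -- the composed series
  set L : ℂ →L[ℂ] EuclideanSpace ℂ (Fin n) := ContinuousLinearMap.toSpanSingleton ℂ v with hL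
  set q1 : FormalMultilinearSeries ℂ ℂ ℂ := p.compContinuousLinearMap L with hq1def
  have hq1norm : ∀ m : ℕ, ‖q1 m‖ ≤ ‖p m‖ := by
    intro m
    have h1 := ContinuousMultilinearMap.norm_compContinuousLinearMap_le (p m)
      (fun _ : Fin m => L)
    have h2 : ∏ _i : Fin m, ‖L‖ = 1 := by
      rw [hL, ContinuousLinearMap.norm_toSpanSingleton, hv]
      simp
    rw [h2, mul_one] at h1
    exact h1
  have hrad : p.radius ≤ q1.radius := by
    refine ENNReal.le_of_forall_nnreal_lt ?_
    intro r hr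
    obtain ⟨C, hC0, hC⟩ := p.norm_mul_pow_le_of_lt_radius hr
    refine q1.le_radius_of_bound C fun m => ?_
    calc ‖q1 m‖ * (r:ℝ) ^ m ≤ ‖p m‖ * (r:ℝ) ^ m := by
          apply mul_le_mul_of_nonneg_right (hq1norm m) (by positivity)
      _ ≤ C := hC m
  have hq1 : HasFPowerSeriesOnBall φ q1 0 r₀ := by
    constructor
    · exact hpb.r_le.trans hrad
    · exact hpb.r_pos
    · intro y hy
      have hy' : y • v ∈ Metric.eball (0 : EuclideanSpace ℂ (Fin n)) r₀ := by
        rw [Metric.mem_eball] at hy ⊢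
        have h1 : edist (y • v) 0 = (‖y • v‖₊ : ℝ≥0∞) := by
          rw [edist_zero_right, enorm_eq_nnnorm]
        have h2 : edist y 0 = (‖y‖₊ : ℝ≥0∞) := by rw [edist_zero_right, enorm_eq_nnnorm]
        rw [h1]
        rw [h2] at hy
        have h3 : ‖y • v‖₊ = ‖y‖₊ :=
          NNReal.coe_injective (by rw [coe_nnnorm, coe_nnnorm, norm_smul, hv, mul_one])
        rw [h3]
        exact hy
      have h2 := hpb.hasSum hy'
      have h3 : ∀ m : ℕ, (q1 m fun _ => y) = p m fun _ => y • v := by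
        intro m
        rw [hq1def, FormalMultilinearSeries.compContinuousLinearMap_apply]
        congr 1
      have h4 : φ (0 + y) = f (z₀ + y • v) := by
        simp only [hφdef, zero_add]
      rw [h4]
      simpa only [h3] using h2
  have hq1At : HasFPowerSeriesAt φ q1 0 := ⟨r₀, hq1⟩
  have hq1ψ : HasFPowerSeriesAt ψ q1 0 := hq1At.congr hψφ.symm
  have hqeq : q1 = cauchyPowerSeries ψ 0 (9/20) :=
    hq1ψ.eq_formalMultilinearSeries hc.hasFPowerSeriesAt
  -- bound on the Cauchy coefficients
  have hcb : ‖cauchyPowerSeries ψ 0 (9/20) k‖ ≤ M * (20/9) ^ k := by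
    refine (norm_cauchyPowerSeries_le ψ 0 (9/20) k).trans ?_
    have hint : (∫ θ : ℝ in (0)..(2 * Real.pi), ‖ψ (circleMap 0 (9/20) θ)‖) ≤ 2 * Real.pi * M := by
      have h1 : ∀ θ ∈ Set.uIoc (0:ℝ) (2 * Real.pi), ‖‖ψ (circleMap 0 (9/20) θ)‖‖ ≤ M := by
        intro θ _
        rw [norm_norm]
        apply hψb
        rw [mem_ball_zero_iff]
        have := norm_circleMap_zero (9/20) θ
        rw [this, abs_of_pos (by norm_num : (0:ℝ) < 9/20)]
        norm_num
      have h2 := intervalIntegral.norm_integral_le_of_norm_le_const h1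
      have h3 : |2 * Real.pi - 0| = 2 * Real.pi := by
        rw [sub_zero, abs_of_pos Real.two_pi_pos]
      rw [h3] at h2
      calc (∫ θ : ℝ in (0)..(2 * Real.pi), ‖ψ (circleMap 0 (9/20) θ)‖)
          ≤ ‖∫ θ : ℝ in (0)..(2 * Real.pi), ‖ψ (circleMap 0 (9/20) θ)‖‖ := le_abs_self _
        _ ≤ M * (2 * Real.pi) := h2
        _ = 2 * Real.pi * M := by ring
    have h5 : |((9:ℝ)/20)|⁻¹ ^ k = (20/9 : ℝ) ^ k := by
      rw [abs_of_pos (by norm_num : (0:ℝ) < 9/20)]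
      norm_num
    rw [h5]
    apply mul_le_mul_of_nonneg_right _ (by positivity)
    calc (2 * Real.pi)⁻¹ * (∫ θ : ℝ in (0)..(2 * Real.pi), ‖ψ (circleMap 0 (9/20) θ)‖)
        ≤ (2 * Real.pi)⁻¹ * (2 * Real.pi * M) := by
          apply mul_le_mul_of_nonneg_left hint (by positivity)
      _ = M := by field_simp
  -- conclude
  have hdiag : p k (fun _ => v) = q1 k (fun _ => (1:ℂ)) := by
    rw [hq1def, FormalMultilinearSeries.compContinuousLinearMap_apply]
    congr 1
    funext i
    rw [Function.comp_apply, hL, ContinuousLinearMap.toSpanSingleton_apply, one_smul]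
  rw [hdiag]
  calc ‖q1 k (fun _ => (1:ℂ))‖ ≤ ‖q1 k‖ * ∏ _i : Fin k, ‖(1:ℂ)‖ :=
        (q1 k).le_opNorm _
    _ = ‖q1 k‖ := by simp
    _ ≤ M * (20/9) ^ k := by rw [hqeq]; exact hcb

/-- **Extension across an isolated point in dimension ≥ 2.** For `n ≥ 2`, every
function holomorphic on the punctured open unit ball `B \ {0}` of `ℂⁿ` extends
holomorphically to the whole ball `B`. -/
theorem extension_across_point {n : ℕ} (hn : 2 ≤ n)
    (f : EuclideanSpace ℂ (Fin n) → ℂ)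
    (hf : AnalyticOn ℂ f (Metric.ball (0 : EuclideanSpace ℂ (Fin n)) 1 \ {0})) :
    ∃ g : EuclideanSpace ℂ (Fin n) → ℂ,
      AnalyticOn ℂ g (Metric.ball (0 : EuclideanSpace ℂ (Fin n)) 1) ∧
      Set.EqOn g f (Metric.ball (0 : EuclideanSpace ℂ (Fin n)) 1 \ {0}) := by
  classical
  have hOpen : IsOpen (ball (0 : EuclideanSpace ℂ (Fin n)) 1 \ {0}) :=
    isOpen_ball.sdiff isClosed_singleton
  have hfN : AnalyticOnNhd ℂ f (ball (0 : EuclideanSpace ℂ (Fin n)) 1 \ {0}) :=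
    (hOpen.analyticOn_iff_analyticOnNhd).1 hf
  obtain ⟨M, hM0, hMb⟩ := bounded_near_zero hn hfN
  have hnpos : 0 < n := by omega
  -- unit vector and base point
  set e₁ : EuclideanSpace ℂ (Fin n) := EuclideanSpace.single ⟨0, hnpos⟩ (1:ℂ) with he₁def
  have he₁ : ‖e₁‖ = 1 := by
    rw [he₁def, EuclideanSpace.norm_single, norm_one]
  set z₀ : EuclideanSpace ℂ (Fin n) := EuclideanSpace.single ⟨0, hnpos⟩ ((1:ℂ)/100)
    with hz₀def
  have hz₀norm : ‖z₀‖ = 1/100 := by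
    rw [hz₀def, EuclideanSpace.norm_single]
    rw [norm_div, norm_one]
    norm_num [Complex.norm_ofNat]
  have hz₀ne : z₀ ≠ 0 := by
    intro h; rw [h, norm_zero] at hz₀norm; norm_num at hz₀norm
  have hz₀mem : z₀ ∈ ball (0 : EuclideanSpace ℂ (Fin n)) 1 \ {0} := by
    constructor
    · rw [mem_ball_zero_iff, hz₀norm]; norm_num
    · simpa using hz₀ne
  obtain ⟨p, r₀, hpb⟩ := hfN z₀ hz₀mem
  -- diagonal bounds for all vectors
  have hdiagAll : ∀ k : ℕ, ∀ u : EuclideanSpace ℂ (Fin n),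
      ‖p k (fun _ => u)‖ ≤ M * (20/9) ^ k * ‖u‖ ^ k := by
    intro k u
    rcases eq_or_ne u 0 with rfl | hune
    · rcases Nat.eq_zero_or_pos k with rfl | hk
      · have h1 : (fun _ : Fin 0 => (0 : EuclideanSpace ℂ (Fin n))) = (fun _ => e₁) := by
          funext i; exact absurd i.2 (by omega)
        rw [h1]
        have := diag_coeff_bound hfN hM0 hMb hz₀norm hpb e₁ he₁ 0
        simpa using this
      · have h1 : p k (fun _ => (0 : EuclideanSpace ℂ (Fin n))) = 0 :=
          (p k).toMultilinearMap.map_coord_zero ⟨0, hk⟩ rfl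
        rw [h1, norm_zero, norm_zero]
        rw [zero_pow (by omega : k ≠ 0), mul_zero]
    · set w : EuclideanSpace ℂ (Fin n) := ((‖u‖ : ℂ))⁻¹ • u with hwdef
      have hwnorm : ‖w‖ = 1 := by
        rw [hwdef, norm_smul, norm_inv, Complex.norm_real, norm_norm,
          inv_mul_cancel₀ (norm_ne_zero_iff.2 hune)]
      have hsmul : (fun _ : Fin k => u) = fun _ : Fin k => ((‖u‖ : ℂ)) • w := by
        funext i
        rw [hwdef, smul_inv_smul₀]
        simpa using norm_ne_zero_iff.2 hune
      have h2 : p k (fun _ => u) = ((‖u‖ : ℂ)) ^ k • p k (fun _ => w) := by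
        rw [hsmul]
        have := (p k).map_smul_univ (fun _ : Fin k => ((‖u‖:ℝ) : ℂ)) (fun _ => w)
        rw [this]
        simp [Finset.prod_const]
      rw [h2, norm_smul, norm_pow, Complex.norm_real, norm_norm]
      calc ‖u‖ ^ k * ‖p k (fun _ => w)‖ ≤ ‖u‖ ^ k * (M * (20/9) ^ k) := by
            apply mul_le_mul_of_nonneg_left
              (diag_coeff_bound hfN hM0 hMb hz₀norm hpb w hwnorm k) (by positivity)
        _ = M * (20/9) ^ k * ‖u‖ ^ k := by ring
  -- the symmetrized series
  set q : FormalMultilinearSeries ℂ (EuclideanSpace ℂ (Fin n)) ℂ :=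
    fun k => symPart (p k) with hqdef
  have hqnorm : ∀ k, ‖q k‖ ≤ M * (40/3) ^ k := by
    intro k
    have h1 : ‖q k‖ ≤ (M * (20/9) ^ k) * (2 * k) ^ k / k.factorial :=
      symPart_norm_le (p k) (by positivity) (hdiagAll k)
    have h2 : (M * (20/9) ^ k) * (2 * k) ^ k / k.factorial
        = (M * (20/9) ^ k) * ((2 * (k:ℝ)) ^ k / k.factorial) := by ring
    have h3 : (M * (20/9) ^ k) * ((2 * (k:ℝ)) ^ k / k.factorial)
        ≤ (M * (20/9) ^ k) * 6 ^ k :=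
      mul_le_mul_of_nonneg_left (fac_bound k) (by positivity)
    calc ‖q k‖ ≤ (M * (20/9) ^ k) * (2 * k) ^ k / k.factorial := h1
      _ = (M * (20/9) ^ k) * ((2 * (k:ℝ)) ^ k / k.factorial) := h2
      _ ≤ (M * (20/9) ^ k) * 6 ^ k := h3
      _ = M * (40/3) ^ k := by
          rw [mul_assoc, ← mul_pow]
          norm_num
  have hqrad : ((7/100 : ℝ≥0) : ℝ≥0∞) ≤ q.radius := by
    refine q.le_radius_of_bound M fun k => ?_
    have h1 : ‖q k‖ * ((7/100 : ℝ≥0) : ℝ) ^ k ≤ (M * (40/3) ^ k) * (7/100 : ℝ) ^ k := by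
      apply mul_le_mul (hqnorm k) ?_ (by positivity) (by positivity)
      norm_num
    refine h1.trans ?_
    have h2 : (M * (40/3) ^ k) * (7/100 : ℝ) ^ k = M * (14/15 : ℝ) ^ k := by
      rw [mul_assoc, ← mul_pow]
      norm_num
    rw [h2]
    calc M * (14/15 : ℝ) ^ k ≤ M * 1 :=
          mul_le_mul_of_nonneg_left (pow_le_one₀ (by norm_num) (by norm_num)) hM0
      _ = M := mul_one M
  -- q is a power series for f at z₀
  have hdiagEq : ∀ (k : ℕ) (y : EuclideanSpace ℂ (Fin n)),
      q k (fun _ => y) = p k (fun _ => y) := fun k y => symPart_diag (p k) y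
  set rr : ℝ≥0∞ := min r₀ ((7/100 : ℝ≥0) : ℝ≥0∞) with hrrdef
  have hrrpos : 0 < rr := by
    apply lt_min hpb.r_pos
    exact_mod_cast (by norm_num : (0 : ℝ≥0) < 7/100)
  have hq : HasFPowerSeriesOnBall f q z₀ rr := by
    constructor
    · exact le_trans (min_le_right _ _) hqrad
    · exact hrrpos
    · intro y hy
      have hy' : y ∈ Metric.eball (0 : EuclideanSpace ℂ (Fin n)) r₀ :=
        Metric.eball_subset_eball (min_le_left _ _) hy
      have h2 := hpb.hasSum hy'
      have h3 : (fun k => q k (fun _ => y)) = fun k => p k (fun _ => y) :=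
        funext fun k => hdiagEq k y
      rw [h3]
      exact h2
  have hradpos : 0 < q.radius :=
    lt_of_lt_of_le (by exact_mod_cast (by norm_num : (0 : ℝ≥0) < 7/100)) hqrad
  have hsum := q.hasFPowerSeriesOnBall hradpos
  set G : EuclideanSpace ℂ (Fin n) → ℂ := fun z => q.sum (z - z₀) with hGdef
  have hGan : ∀ z ∈ ball z₀ (7/100 : ℝ), AnalyticAt ℂ G z := by
    intro z hz
    have hmem : z - z₀ ∈ Metric.eball (0 : EuclideanSpace ℂ (Fin n)) q.radius := by
      rw [Metric.mem_eball, edist_zero_right, enorm_eq_nnnorm]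
      refine lt_of_lt_of_le ?_ hqrad
      rw [ENNReal.coe_lt_coe]
      have h1 : ‖z - z₀‖ < 7/100 := by
        rw [← dist_eq_norm]
        exact mem_ball.1 hz
      rw [← NNReal.coe_lt_coe]
      simpa [coe_nnnorm] using h1
    have h1 : AnalyticAt ℂ q.sum (z - z₀) := hsum.analyticOnNhd _ (by simpa using hmem)
    have haff : AnalyticAt ℂ (fun w : EuclideanSpace ℂ (Fin n) => w - z₀) z :=
      (analyticAt_id).sub analyticAt_const
    have h2 : AnalyticAt ℂ (q.sum ∘ (fun w : EuclideanSpace ℂ (Fin n) => w - z₀)) z :=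
      AnalyticAt.comp (g := q.sum) (f := fun w => w - z₀) (x := z) h1 haff
    exact h2
  -- rank of the real vector space
  have hrank : 1 < Module.rank ℝ (EuclideanSpace ℂ (Fin n)) := by
    have h1 : Module.finrank ℝ (EuclideanSpace ℂ (Fin n)) = 2 * n := by
      rw [← Module.finrank_mul_finrank ℝ ℂ (EuclideanSpace ℂ (Fin n)),
        Complex.finrank_real_complex, finrank_euclideanSpace_fin]
    have h2 : (Module.finrank ℝ (EuclideanSpace ℂ (Fin n)) : Cardinal)
        = Module.rank ℝ (EuclideanSpace ℂ (Fin n)) := Module.finrank_eq_rank ℝ _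
    rw [← h2, h1]
    exact_mod_cast (by omega : 1 < 2 * n)
  -- identity theorem on the punctured small ball
  set V : Set (EuclideanSpace ℂ (Fin n)) := ball z₀ (7/100 : ℝ) \ {0} with hVdef
  have hz₀V : z₀ ∈ V := by
    constructor
    · exact mem_ball_self (by norm_num)
    · simpa using hz₀ne
  have hVsub : V ⊆ ball (0 : EuclideanSpace ℂ (Fin n)) 1 \ {0} := by
    rintro z ⟨hz1, hz2⟩
    refine ⟨?_, hz2⟩
    rw [mem_ball_zero_iff]
    calc ‖z‖ = ‖(z - z₀) + z₀‖ := by rw [sub_add_cancel]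
      _ ≤ ‖z - z₀‖ + ‖z₀‖ := norm_add_le _ _
      _ < 7/100 + 1/100 := by
          apply add_lt_add_of_lt_of_le
          · rw [← dist_eq_norm]; exact mem_ball.1 hz1
          · rw [hz₀norm]
      _ < 1 := by norm_num
  have hVpre : IsPreconnected V :=
    (ball_diff_pt_isPathConnected hrank ⟨z₀, hz₀V⟩).isConnected.isPreconnected
  have hev : f =ᶠ[𝓝 z₀] G := by
    have hball : Metric.eball z₀ rr ∈ 𝓝 z₀ :=
      Metric.isOpen_eball.mem_nhds (Metric.mem_eball_self hrrpos)
    filter_upwards [hball] with z hz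
    have h1 : z - z₀ ∈ Metric.eball (0 : EuclideanSpace ℂ (Fin n)) rr := by
      rw [Metric.mem_eball, edist_zero_right]
      rw [Metric.mem_eball] at hz
      rwa [edist_eq_enorm_sub] at hz
    have h2 := hq.sum h1
    rw [add_sub_cancel] at h2
    exact h2
  have heq : EqOn f G V :=
    AnalyticOnNhd.eqOn_of_preconnected_of_eventuallyEq
      (fun z hz => hfN z (hVsub hz)) (fun z hz => hGan z hz.1) hVpre hz₀V hev
  -- the extension
  refine ⟨Function.update f 0 (G 0), ?_, ?_⟩
  · rw [isOpen_ball.analyticOn_iff_analyticOnNhd]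
    intro z hz
    rcases eq_or_ne z 0 with rfl | hzne
    · have h0ball : (0 : EuclideanSpace ℂ (Fin n)) ∈ ball z₀ (7/100 : ℝ) := by
        rw [mem_ball, dist_zero_left, hz₀norm]
        norm_num
      have hGan0 := hGan 0 h0ball
      have hevg : Function.update f 0 (G 0) =ᶠ[𝓝 (0 : EuclideanSpace ℂ (Fin n))] G := by
        filter_upwards [isOpen_ball.mem_nhds h0ball] with w hw
        rcases eq_or_ne w 0 with rfl | hwne
        · rw [Function.update_self]
        · rw [Function.update_of_ne hwne]
          exact heq ⟨hw, by simpa using hwne⟩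
      exact hGan0.congr hevg.symm
    · have h1 : AnalyticAt ℂ f z := hfN z ⟨hz, by simpa using hzne⟩
      have hevg : Function.update f 0 (G 0) =ᶠ[𝓝 z] f := by
        filter_upwards [isOpen_compl_singleton.mem_nhds
          (by simpa using hzne : z ∈ ({0} : Set (EuclideanSpace ℂ (Fin n)))ᶜ)] with w hw
        exact Function.update_of_ne (by simpa using hw) _ _
      exact h1.congr hevg.symm
  · intro z hz
    have hzne : z ≠ 0 := by
      intro h
      exact hz.2 (by simpa using h)
    exact Function.update_of_ne hzne _ _
end

section
/- Let n ≥ 1, s ≥ 1, and let f : ℂⁿ → ℂ be analytic on an open set containing the closed unit polydisk P = {z ∈ ℂⁿ : |zᵢ| ≤ 1 for all i}. Suppose f vanishes to order at least s at 0, i.e., the iterated derivatives of f at 0 of all orders k < s vanish. Then for every z ∈ P one has |f(z)| ≤ (maxᵢ |zᵢ|)^s · sup_{w ∈ P} |f(w)|. -/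
open Function Metric Set

/-- Algebraic identity for iterated `dslope`. -/
lemma iter_dslope_identity (g : ℂ → ℂ) (k : ℕ) (t : ℂ) :
    t ^ k * ((Function.swap dslope 0)^[k] g t) =
      g t - ∑ j ∈ Finset.range k, t ^ j * ((Function.swap dslope 0)^[j] g 0) := by
  induction k with
  | zero => simp
  | succ k ih =>
    set h := (Function.swap dslope 0)^[k] g with hh
    have hd : t * dslope h 0 t = h t - h 0 := by
      have := sub_smul_dslope h 0 t
      simpa [smul_eq_mul] using this
    rw [Function.iterate_succ_apply', Finset.sum_range_succ]
    have : (Function.swap dslope 0) h = dslope h 0 := rfl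
    rw [this]
    calc t ^ (k + 1) * dslope h 0 t = t ^ k * (t * dslope h 0 t) := by ring
      _ = t ^ k * (h t - h 0) := by rw [hd]
      _ = t ^ k * h t - t ^ k * h 0 := by ring
      _ = g t - ∑ j ∈ Finset.range k, t ^ j * ((Function.swap dslope 0)^[j] g 0)
            - t ^ k * h 0 := by rw [ih]
      _ = _ := by ring

/-- One-variable Schwarz lemma with vanishing order `s`. -/
lemma one_var_schwarz {s : ℕ} (hs : 1 ≤ s) (g : ℂ → ℂ) (U : Set ℂ) (hU : IsOpen U)
    (hsub : closedBall (0 : ℂ) 1 ⊆ U) (hg : AnalyticOnNhd ℂ g U)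
    (hv : ∀ k < s, iteratedFDeriv ℂ k g 0 = 0) {M : ℝ}
    (hM : ∀ t ∈ sphere (0 : ℂ) 1, ‖g t‖ ≤ M) :
    ∀ t ∈ closedBall (0 : ℂ) 1, ‖g t‖ ≤ ‖t‖ ^ s * M := by
  have h0U : (0 : ℂ) ∈ U := hsub (by simp)
  obtain ⟨p, hp⟩ := hg 0 h0U
  -- coefficients below s vanish
  have hcoeff : ∀ j < s, p.coeff j = 0 := by
    intro j hj
    obtain ⟨r, hr⟩ := hp
    have h1 : Nat.factorial j • p j (fun _ ↦ (1 : ℂ)) = iteratedFDeriv ℂ j g 0 (fun _ ↦ (1 : ℂ)) :=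
      hr.factorial_smul (1 : ℂ) j
    rw [hv j hj] at h1
    simp only [ContinuousMultilinearMap.zero_apply, nsmul_eq_mul, mul_eq_zero] at h1
    rcases h1 with h1 | h1
    · exact absurd h1 (by exact_mod_cast j.factorial_ne_zero)
    · exact h1
  -- values of the iterated dslopes at 0 vanish
  have hval : ∀ j < s, (Function.swap dslope 0)^[j] g 0 = 0 := by
    intro j hj
    have hj' := hp.has_fpower_series_iterate_dslope_fslope j
    have h2 : (FormalMultilinearSeries.fslope^[j] p).coeff 0 = (Function.swap dslope 0)^[j] g 0 :=
      hj'.coeff_zero 1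
    rw [FormalMultilinearSeries.coeff_iterate_fslope, zero_add] at h2
    rw [← h2]
    exact hcoeff j hj
  set h : ℂ → ℂ := (Function.swap dslope 0)^[s] g with hdef
  -- key factorization
  have hfact : ∀ t : ℂ, g t = t ^ s * h t := by
    intro t
    have := iter_dslope_identity g s t
    have hsum : ∑ j ∈ Finset.range s, t ^ j * ((Function.swap dslope 0)^[j] g 0) = 0 :=
      Finset.sum_eq_zero fun j hj => by
        rw [hval j (Finset.mem_range.mp hj), mul_zero]
    rw [hsum, sub_zero] at this
    exact this.symm
  -- analyticity of h at 0
  have hh0 : AnalyticAt ℂ h 0 := ⟨_, hp.has_fpower_series_iterate_dslope_fslope s⟩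
  -- h agrees with an explicit function away from 0
  have hcong : ∀ t : ℂ, t ≠ 0 → h =ᶠ[nhds t] fun x => (x ^ s)⁻¹ * g x := by
    intro t ht
    filter_upwards [isOpen_compl_singleton.mem_nhds (by simpa using ht)] with x hx
    have hx0 : x ≠ 0 := by simpa using hx
    have := hfact x
    field_simp [this]
    rw [this]; ring
  have hdiff : ∀ t ∈ U, DifferentiableAt ℂ h t := by
    intro t ht
    rcases eq_or_ne t 0 with rfl | ht0
    · exact hh0.differentiableAt
    · have hφ : DifferentiableAt ℂ (fun x => (x ^ s)⁻¹ * g x) t := by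
        apply DifferentiableAt.mul
        · exact (differentiableAt_id.pow s).inv (pow_ne_zero s ht0)
        · exact (hg t ht).differentiableAt
      exact hφ.congr_of_eventuallyEq (hcong t ht0)
  have hM0 : 0 ≤ M := le_trans (norm_nonneg _) (hM 1 (by simp))
  -- max modulus principle
  have hDCC : DiffContOnCl ℂ h (ball (0 : ℂ) 1) := by
    constructor
    · intro t ht
      exact (hdiff t (hsub (ball_subset_closedBall ht))).differentiableWithinAt
    · rw [closure_ball (0 : ℂ) one_ne_zero]
      intro t ht
      exact (hdiff t (hsub ht)).continuousAt.continuousWithinAt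
  have hbd : ∀ t ∈ closedBall (0 : ℂ) 1, ‖h t‖ ≤ M := by
    have hfr : ∀ w ∈ frontier (ball (0 : ℂ) 1), ‖h w‖ ≤ M := by
      intro w hw
      rw [frontier_ball (0 : ℂ) one_ne_zero] at hw
      have hw1 : ‖w‖ = 1 := by
        simpa [Complex.dist_eq] using hw
      have heq : ‖g w‖ = ‖w‖ ^ s * ‖h w‖ := by
        rw [hfact w]; simp [map_mul, map_pow]
      rw [hw1, one_pow, one_mul] at heq
      have hgw : ‖g w‖ ≤ M :=
        hM w (by simpa [Metric.mem_sphere, Complex.dist_eq] using hw1)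
      rw [← heq]
      exact hgw
    intro t ht
    have hcl : t ∈ closure (ball (0 : ℂ) 1) := by
      rwa [closure_ball (0 : ℂ) one_ne_zero]
    simpa using
      Complex.norm_le_of_forall_mem_frontier_norm_le isBounded_ball hDCC hfr hcl
  intro t ht
  have : ‖g t‖ = ‖t‖ ^ s * ‖h t‖ := by
    rw [hfact t]; simp [map_mul, map_pow]
  rw [this]
  exact mul_le_mul_of_nonneg_left (hbd t ht) (by positivity)

/-- **Several-variable Schwarz lemma (Siegel's method).** Let `f` be holomorphic on
an open set containing the closed unit polydisk `P` of `ℂⁿ` (`n ≥ 1`), vanishing to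
order at least `s ≥ 1` at the origin. Then
`|f z| ≤ (maxᵢ |zᵢ|)^s · sup_{w ∈ P} |f w|` for every `z ∈ P`. -/
theorem schwarz_lemma_polydisk {n s : ℕ} (hn : 1 ≤ n) (hs : 1 ≤ s)
    (f : (Fin n → ℂ) → ℂ) (V : Set (Fin n → ℂ)) (hV : IsOpen V)
    (hPV : {z : Fin n → ℂ | ∀ i, ‖z i‖ ≤ 1} ⊆ V)
    (hf : AnalyticOn ℂ f V)
    (hvanish : ∀ k < s, iteratedFDeriv ℂ k f 0 = 0) :
    ∀ z ∈ {z : Fin n → ℂ | ∀ i, ‖z i‖ ≤ 1},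
      ‖f z‖ ≤
        (Finset.univ.sup' ⟨⟨0, hn⟩, Finset.mem_univ _⟩ fun i => ‖z i‖) ^ s *
          sSup ((fun w => ‖f w‖) ''
            {w : Fin n → ℂ | ∀ i, ‖w i‖ ≤ 1}) := by
  intro z hz
  set P : Set (Fin n → ℂ) := {z : Fin n → ℂ | ∀ i, ‖z i‖ ≤ 1} with hPdef
  have hfn : AnalyticOnNhd ℂ f V := hV.analyticOn_iff_analyticOnNhd.mp hf
  have h0P : (0 : Fin n → ℂ) ∈ P := fun i => by simp
  -- P is compact
  have hPcomp : IsCompact P := by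
    have : P = Set.pi Set.univ (fun _ : Fin n => closedBall (0 : ℂ) 1) := by
      ext w
      simp [Set.mem_pi, Complex.dist_eq, hPdef]
    rw [this]
    exact isCompact_univ_pi fun _ => isCompact_closedBall _ _
  set M : ℝ := sSup ((fun w => ‖f w‖) '' P) with hMdef
  have hbdd : BddAbove ((fun w => ‖f w‖) '' P) := by
    apply IsCompact.bddAbove_image hPcomp
    exact continuous_norm.comp_continuousOn ((hfn.continuousOn).mono hPV)
  have hMle : ∀ w ∈ P, ‖f w‖ ≤ M := fun w hw =>
    le_csSup hbdd (Set.mem_image_of_mem _ hw)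
  set r : ℝ := Finset.univ.sup' ⟨⟨0, hn⟩, Finset.mem_univ _⟩ fun i => ‖z i‖ with hrdef
  have hrle : ∀ i, ‖z i‖ ≤ r := by
    intro i
    rw [hrdef]
    exact Finset.le_sup' (fun i => ‖z i‖) (Finset.mem_univ i)
  have hr0 : 0 ≤ r := le_trans (norm_nonneg _) (hrle ⟨0, hn⟩)
  have hr1 : r ≤ 1 := Finset.sup'_le _ _ fun i _ => hz i
  have hf00 : f 0 = 0 := by
    have h1 := hvanish 0 hs
    have h2 : iteratedFDeriv ℂ 0 f 0 (fun _ => 0) = f 0 := iteratedFDeriv_zero_apply _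
    rw [h1] at h2
    simpa using h2.symm
  rcases eq_or_lt_of_le hr0 with hr | hr
  · -- r = 0, so z = 0
    have hz0 : z = 0 := by
      funext i
      have := hrle i
      rw [← hr] at this
      exact norm_eq_zero.mp (le_antisymm this (norm_nonneg _))
    rw [hz0, hf00, ← hr]
    simp [zero_pow (Nat.one_le_iff_ne_zero.mp hs)]
  · -- r > 0
    set w : Fin n → ℂ := fun i => z i / (r : ℂ) with hwdef
    set L : ℂ →L[ℂ] (Fin n → ℂ) := (ContinuousLinearMap.id ℂ ℂ).smulRight w with hLdef
    have hL : ∀ t : ℂ, L t = t • w := fun t => rfl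
    have hLmem : ∀ t : ℂ, ‖t‖ ≤ 1 → L t ∈ P := by
      intro t ht i
      rw [hL]
      simp only [Pi.smul_apply, smul_eq_mul, hwdef]
      rw [norm_mul, norm_div]
      have : ‖(r : ℂ)‖ = r := by
        rw [Complex.norm_real, Real.norm_eq_abs, abs_of_pos hr]
      rw [this]
      calc ‖t‖ * (‖z i‖ / r) ≤ 1 * 1 := by
            apply mul_le_mul ht _ (by positivity) zero_le_one
            rw [div_le_one hr]; exact hrle i
        _ = 1 := by ring
    set U : Set ℂ := L ⁻¹' V with hUdef
    have hUopen : IsOpen U := hV.preimage L.continuous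
    have hsub : closedBall (0 : ℂ) 1 ⊆ U := by
      intro t ht
      have : ‖t‖ ≤ 1 := by simpa [Complex.dist_eq] using ht
      exact hPV (hLmem t this)
    have hg : AnalyticOnNhd ℂ (f ∘ L) U := fun t ht =>
      (hfn (L t) ht).comp (L.analyticAt t)
    -- vanishing of iterated derivatives of the composite
    have hvg : ∀ k < s, iteratedFDeriv ℂ k (f ∘ L) 0 = 0 := by
      intro k hk
      have h0V : (0 : Fin n → ℂ) ∈ V := hPV h0P
      obtain ⟨ε, hε, hball⟩ := Metric.isOpen_iff.mp hV 0 h0V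
      have hcd : ContDiffOn ℂ (⊤ : WithTop ℕ∞) f (ball (0 : Fin n → ℂ) ε) :=
        (hfn.mono hball).contDiffOn isOpen_ball.uniqueDiffOn
      have hL0 : L 0 ∈ ball (0 : Fin n → ℂ) ε := by
        rw [map_zero]; exact mem_ball_self hε
      have hup : IsOpen (L ⁻¹' ball (0 : Fin n → ℂ) ε) :=
        isOpen_ball.preimage L.continuous
      have key := L.iteratedFDerivWithin_comp_right hcd isOpen_ball.uniqueDiffOn
        hup.uniqueDiffOn hL0 (i := k) le_top
      have hmem0 : (0 : ℂ) ∈ L ⁻¹' ball (0 : Fin n → ℂ) ε := by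
        rw [Set.mem_preimage, map_zero]; exact mem_ball_self hε
      rw [iteratedFDerivWithin_of_isOpen k hup hmem0,
          iteratedFDerivWithin_of_isOpen k isOpen_ball hL0] at key
      rw [key, map_zero, hvanish k hk]
      ext m
      simp
    -- bound on the unit circle
    have hMb : ∀ t ∈ sphere (0 : ℂ) 1, ‖(f ∘ L) t‖ ≤ M := by
      intro t ht
      have : ‖t‖ ≤ 1 := by
        have : ‖t‖ = 1 := by simpa [Complex.dist_eq] using ht
        exact le_of_eq this
      exact hMle (L t) (hLmem t this)
    have key := one_var_schwarz hs (f ∘ L) U hUopen hsub hg hvg hMb (r : ℂ)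
      (by simpa [Complex.dist_eq, Complex.norm_real, abs_of_pos hr] using hr1)
    have hLr : L (r : ℂ) = z := by
      have hrne : (r : ℂ) ≠ 0 := by exact_mod_cast hr.ne'
      funext i
      rw [hL]
      simp only [Pi.smul_apply, smul_eq_mul, hwdef]
      rw [mul_comm, div_mul_cancel₀ _ hrne]
    have habs : ‖(r : ℂ)‖ = r := by
      rw [Complex.norm_real, Real.norm_eq_abs, abs_of_pos hr]
    rw [Function.comp_apply, hLr, habs] at key
    exact key
end

section
/- Let Ω = {(z₁, z₂) ∈ ℂ² : |z₁| < 1, |z₂| < 1, and Re z₁ < |z₂|²}. Then there exists an open set V ⊆ ℂ² containing the origin such that every function f : ℂ² → ℂ analytic on Ω extends to a function g : ℂ² → ℂ analytic on Ω ∪ V with g = f on Ω. -/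
open Complex Metric Set Finset Real
open scoped Topology NNReal ENNReal

noncomputable section LeviAux

/-- The domain `Ω`. -/
def leviOm : Set (ℂ × ℂ) :=
  {p : ℂ × ℂ | ‖p.1‖ < 1 ∧ ‖p.2‖ < 1 ∧ p.1.re < ‖p.2‖ ^ 2}

/-- The base domain in the first variable. -/
def leviD : Set ℂ := {z : ℂ | ‖z‖ < 1 ∧ z.re < 1 / 2}

lemma leviOm_open : IsOpen leviOm := by
  have h1 : IsOpen {p : ℂ × ℂ | ‖p.1‖ < 1} :=
    isOpen_lt (continuous_norm.comp continuous_fst) continuous_const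
  have h2 : IsOpen {p : ℂ × ℂ | ‖p.2‖ < 1} :=
    isOpen_lt (continuous_norm.comp continuous_snd) continuous_const
  have h3 : IsOpen {p : ℂ × ℂ | p.1.re < ‖p.2‖ ^ 2} :=
    isOpen_lt (Complex.continuous_re.comp continuous_fst)
      ((continuous_norm.comp continuous_snd).pow 2)
  have : leviOm = ({p : ℂ × ℂ | ‖p.1‖ < 1} ∩ {p : ℂ × ℂ | ‖p.2‖ < 1}) ∩
      {p : ℂ × ℂ | p.1.re < ‖p.2‖ ^ 2} := by
    ext p; simp [leviOm, and_assoc]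
  rw [this]; exact (h1.inter h2).inter h3

lemma leviD_open : IsOpen leviD := by
  have h1 : IsOpen {z : ℂ | ‖z‖ < 1} :=
    isOpen_lt continuous_norm continuous_const
  have h2 : IsOpen {z : ℂ | z.re < 1 / 2} :=
    isOpen_lt Complex.continuous_re continuous_const
  exact h1.inter h2

lemma mem_leviOm_of_sphere {z w : ℂ} (hz : z ∈ leviD)
    (hw : w ∈ sphere (0 : ℂ) (3 / 4)) : (z, w) ∈ leviOm := by
  have hw' : ‖w‖ = 3 / 4 := by
    simpa [Complex.dist_eq] using hw
  refine ⟨hz.1, ?_, ?_⟩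
  · rw [hw']; norm_num
  · rw [hw']; calc z.re < 1 / 2 := hz.2
      _ < (3 / 4 : ℝ) ^ 2 := by norm_num

/-- Cauchy coefficient of a function on the circle of radius `r` about `0`. -/
def ccirc (φ : ℂ → ℂ) (r : ℝ) (n : ℕ) : ℂ :=
  (2 * (π : ℂ) * I)⁻¹ * ∮ w in C(0, r), (w ^ (n + 1))⁻¹ * φ w

lemma norm_two_pi_I_inv : ‖(2 * (π : ℂ) * I)⁻¹‖ = (2 * π)⁻¹ := by
  simp [norm_inv, map_mul, Complex.norm_I, Complex.norm_real,
    abs_of_pos Real.pi_pos]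

/-- The Cauchy coefficients represent the function inside the circle. -/
lemma ccirc_hasSum {φ : ℂ → ℂ} {r : ℝ} (hr : 0 < r)
    (hd : DifferentiableOn ℂ φ (closedBall (0 : ℂ) r)) {u : ℂ}
    (hu : ‖u‖ < r) :
    HasSum (fun n => ccirc φ r n * u ^ n) (φ u) := by
  lift r to ℝ≥0 using hr.le
  have hr' : 0 < r := by exact_mod_cast hr
  have hps : HasFPowerSeriesOnBall φ (cauchyPowerSeries φ 0 r) 0 r :=
    hd.hasFPowerSeriesOnBall hr'
  have hu' : u ∈ Metric.eball (0 : ℂ) r := by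
    rw [Metric.emetric_ball_nnreal]
    simpa [Complex.dist_eq] using hu
  have hsum := hps.hasSum (y := u) hu'
  rw [zero_add] at hsum
  have hcoeff : ∀ n, (cauchyPowerSeries φ 0 (r : ℝ) n fun _ => u) = ccirc φ (r : ℝ) n * u ^ n := by
    intro n
    rw [cauchyPowerSeries_apply]
    have hEq : EqOn (fun z : ℂ => (u / (z - 0)) ^ n • (z - 0)⁻¹ • φ z)
        (fun z : ℂ => u ^ n • ((z ^ (n + 1))⁻¹ * φ z)) (sphere (0 : ℂ) (r : ℝ)) := by
      intro z hz
      have hz' : ‖z‖ = r := by simpa [Complex.dist_eq] using hz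
      have hzne : z ≠ 0 := by
        intro h
        rw [h, norm_zero] at hz'
        exact hr'.ne' (by exact_mod_cast hz'.symm)
      simp only [sub_zero, smul_eq_mul, div_pow, pow_succ]
      field_simp
    rw [circleIntegral.integral_congr (by positivity) hEq, circleIntegral.integral_smul]
    simp only [smul_eq_mul, ccirc]
    ring
  simpa only [hcoeff] using hsum

/-- Cauchy estimate for the coefficients. -/
lemma ccirc_norm_le {φ : ℂ → ℂ} {r M : ℝ} (hr : 0 < r)
    (hM : ∀ w ∈ sphere (0 : ℂ) r, ‖φ w‖ ≤ M) (n : ℕ) :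
    ‖ccirc φ r n‖ ≤ M * (r⁻¹) ^ n := by
  have hbound : ∀ w ∈ sphere (0 : ℂ) r, ‖(w ^ (n + 1))⁻¹ * φ w‖ ≤ (r ^ (n + 1))⁻¹ * M := by
    intro w hw
    have hw' : ‖w‖ = r := by simpa [Complex.dist_eq] using hw
    rw [norm_mul, norm_inv, norm_pow, hw']
    exact mul_le_mul_of_nonneg_left (hM w hw) (by positivity)
  have h1 : ‖∮ w in C(0, r), (w ^ (n + 1))⁻¹ * φ w‖ ≤ 2 * π * r * ((r ^ (n + 1))⁻¹ * M) :=
    circleIntegral.norm_integral_le_of_norm_le_const hr.le hbound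
  have h2 : ‖ccirc φ r n‖ ≤ (2 * π)⁻¹ * (2 * π * r * ((r ^ (n + 1))⁻¹ * M)) := by
    rw [ccirc, norm_mul, norm_two_pi_I_inv]
    exact mul_le_mul_of_nonneg_left h1 (by positivity)
  refine h2.trans (le_of_eq ?_)
  have hπ : (2 * π) ≠ 0 := by positivity
  field_simp [pow_succ]
  rw [one_div, inv_pow, pow_succ, mul_comm (r ^ n) r, mul_assoc, mul_assoc, mul_left_comm (r ^ n) M,
    mul_inv_cancel₀ (pow_ne_zero _ hr.ne'), mul_one]

/-- The Hartogs coefficients: Cauchy coefficients in the second variable. -/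
def acoef (f : ℂ × ℂ → ℂ) (n : ℕ) (z : ℂ) : ℂ :=
  ccirc (fun w => f (z, w)) (3 / 4) n

section WithF

variable {f : ℂ × ℂ → ℂ}

lemma acoef_differentiableOn (hf : AnalyticOnNhd ℂ f leviOm) (n : ℕ) :
    DifferentiableOn ℂ (acoef f n) leviD := by
  have hfc : ContinuousOn f leviOm := hf.continuousOn
  have hf1an : AnalyticOnNhd ℂ (fderiv ℂ f) leviOm := hf.fderiv_of_isOpen leviOm_open
  set f1 : ℂ × ℂ → ℂ := fun p => fderiv ℂ f p (1, 0) with hf1def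
  have hf1c : ContinuousOn f1 leviOm :=
    ContinuousOn.clm_apply hf1an.continuousOn continuousOn_const
  intro z hz
  -- an `ε`-ball around `z` inside `leviD`
  obtain ⟨ε, hε, hball⟩ := Metric.isOpen_iff.mp leviD_open z hz
  have hε2 : 0 < ε / 2 := by linarith
  have hcb : closedBall z (ε / 2) ⊆ leviD := fun y hy => hball (by
    have : dist y z ≤ ε / 2 := hy
    exact mem_ball.mpr (lt_of_le_of_lt this (by linarith)))
  -- compact set and bound for the derivative
  have hKsub : closedBall z (ε / 2) ×ˢ sphere (0 : ℂ) (3 / 4) ⊆ leviOm := by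
    rintro ⟨y, w⟩ ⟨hy, hw⟩
    exact mem_leviOm_of_sphere (hcb hy) hw
  have hKcomp : IsCompact (closedBall z (ε / 2) ×ˢ sphere (0 : ℂ) (3 / 4)) :=
    (isCompact_closedBall _ _).prod (isCompact_sphere _ _)
  obtain ⟨C, hC⟩ := hKcomp.exists_bound_of_continuousOn (hf1c.mono hKsub)
  -- the integrand and its derivative in the parameter
  set G : ℂ → ℝ → ℂ := fun x θ =>
    deriv (circleMap 0 (3 / 4)) θ •
      ((circleMap 0 (3 / 4) θ ^ (n + 1))⁻¹ * f (x, circleMap 0 (3 / 4) θ)) with hGdef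
  set G' : ℂ → ℝ → ℂ := fun x θ =>
    deriv (circleMap 0 (3 / 4)) θ •
      ((circleMap 0 (3 / 4) θ ^ (n + 1))⁻¹ * f1 (x, circleMap 0 (3 / 4) θ)) with hG'def
  have hcm : ∀ θ : ℝ, circleMap 0 (3 / 4) θ ∈ sphere (0 : ℂ) (3 / 4) :=
    fun θ => circleMap_mem_sphere 0 (by norm_num) θ
  have hcmne : ∀ θ : ℝ, circleMap 0 (3 / 4) θ ≠ 0 := fun θ =>
    circleMap_ne_center (by norm_num)
  have hkernel : Continuous fun θ : ℝ => (circleMap 0 (3 / 4) θ ^ (n + 1))⁻¹ :=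
    ((continuous_circleMap 0 (3 / 4)).pow (n + 1)).inv₀ fun θ => pow_ne_zero _ (hcmne θ)
  have hderivcm : Continuous fun θ : ℝ => deriv (circleMap 0 (3 / 4)) θ := by
    simp only [deriv_circleMap]
    exact (continuous_circleMap 0 (3 / 4)).mul continuous_const
  have hGcont : ∀ x ∈ closedBall z (ε / 2), Continuous (G x) := by
    intro x hx
    apply hderivcm.smul
    apply hkernel.mul
    apply (hfc.comp_continuous (continuous_const.prodMk (continuous_circleMap 0 (3 / 4))))
    intro θ
    exact mem_leviOm_of_sphere (hcb hx) (hcm θ)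
  have hG'cont : Continuous (G' z) := by
    apply hderivcm.smul
    apply hkernel.mul
    apply (hf1c.comp_continuous (continuous_const.prodMk (continuous_circleMap 0 (3 / 4))))
    intro θ
    exact mem_leviOm_of_sphere (hcb (mem_closedBall_self hε2.le)) (hcm θ)
  -- apply the parametric differentiation theorem
  have key := intervalIntegral.hasDerivAt_integral_of_dominated_loc_of_deriv_le
    (𝕜 := ℂ) (μ := MeasureTheory.volume) (F := G) (F' := G') (x₀ := z)
    (a := 0) (b := 2 * π) (bound := fun _ => (3 / 4) * (((3 / 4 : ℝ) ^ (n + 1))⁻¹ * C))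
    (Metric.ball_mem_nhds z hε2) ?_ ?_ ?_ ?_ ?_ ?_
  · -- conclude
    obtain ⟨-, hkey⟩ := key
    have : HasDerivAt (acoef f n)
        ((2 * (π : ℂ) * I)⁻¹ * ∫ θ in (0 : ℝ)..2 * π, G' z θ) z := by
      have := hkey.const_mul ((2 * (π : ℂ) * I)⁻¹)
      exact this
    exact this.differentiableAt.differentiableWithinAt
  · -- measurability of G x near z
    filter_upwards [Metric.closedBall_mem_nhds z hε2] with x hx
    exact (hGcont x hx).aestronglyMeasurable
  · exact (hGcont z (mem_closedBall_self hε2.le)).intervalIntegrable 0 (2 * π)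
  · exact hG'cont.aestronglyMeasurable
  · -- bound on the derivative
    refine MeasureTheory.ae_of_all _ fun θ _ => fun x hx => ?_
    have hx' : x ∈ closedBall z (ε / 2) := ball_subset_closedBall hx
    have hmem : (x, circleMap 0 (3 / 4) θ) ∈
        closedBall z (ε / 2) ×ˢ sphere (0 : ℂ) (3 / 4) := ⟨hx', hcm θ⟩
    have hnc : ‖circleMap 0 (3 / 4) θ‖ = 3 / 4 := by
      simp [norm_circleMap_zero]; norm_num
    have hnI : ‖(I : ℂ)‖ = 1 := by simp
    have h1 : ‖G' x θ‖ = (3 / 4) * ((((3 : ℝ) / 4) ^ (n + 1))⁻¹ * ‖f1 (x, circleMap 0 (3 / 4) θ)‖) := by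
      rw [hG'def]
      simp only [deriv_circleMap, norm_smul, norm_mul, norm_inv, norm_pow, hnc, hnI]
      ring
    rw [h1]
    exact mul_le_mul_of_nonneg_left
      (mul_le_mul_of_nonneg_left (hC _ hmem) (by positivity)) (by norm_num)
  · exact intervalIntegrable_const
  · -- differentiability in the parameter
    refine MeasureTheory.ae_of_all _ fun θ _ => fun x hx => ?_
    have hx' : x ∈ closedBall z (ε / 2) := ball_subset_closedBall hx
    have hmem : (x, circleMap 0 (3 / 4) θ) ∈ leviOm :=
      mem_leviOm_of_sphere (hcb hx') (hcm θ)
    have hfd : DifferentiableAt ℂ f (x, circleMap 0 (3 / 4) θ) :=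
      (hf _ hmem).differentiableAt
    have hcurve : HasDerivAt (fun y : ℂ => (y, circleMap 0 (3 / 4) θ))
        ((1 : ℂ), (0 : ℂ)) x := (hasDerivAt_id x).prodMk (hasDerivAt_const x _)
    have h0 : HasDerivAt (fun y : ℂ => f (y, circleMap 0 (3 / 4) θ))
        (f1 (x, circleMap 0 (3 / 4) θ)) x :=
      hfd.hasFDerivAt.comp_hasDerivAt x hcurve
    exact ((h0.const_mul ((circleMap 0 (3 / 4) θ ^ (n + 1))⁻¹)).const_smul
      (deriv (circleMap 0 (3 / 4)) θ))

lemma closedBall14_subset : closedBall (0 : ℂ) (1 / 4) ⊆ leviD := by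
  intro z hz
  have hz' : ‖z‖ ≤ 1 / 4 := by simpa [Complex.dist_eq] using hz
  refine ⟨lt_of_le_of_lt hz' (by norm_num), ?_⟩
  calc z.re ≤ ‖z‖ := Complex.re_le_norm z
    _ ≤ 1 / 4 := hz'
    _ < 1 / 2 := by norm_num

/-- Second-level Cauchy coefficients in the first variable. -/
def ccoef (f : ℂ × ℂ → ℂ) (m n : ℕ) : ℂ := ccirc (acoef f n) (1 / 4) m

lemma hasSum_acoef (hf : AnalyticOnNhd ℂ f leviOm) {z₁ : ℂ}
    (h1 : ‖z₁‖ < 1) (h2 : z₁.re < 0) {z₂ : ℂ} (h3 : ‖z₂‖ < 3 / 4) :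
    HasSum (fun n => acoef f n z₁ * z₂ ^ n) (f (z₁, z₂)) := by
  have hd : DifferentiableOn ℂ (fun w => f (z₁, w)) (closedBall (0 : ℂ) (3 / 4)) := by
    intro w hw
    have hw' : ‖w‖ ≤ 3 / 4 := by simpa [Complex.dist_eq] using hw
    have hmem : (z₁, w) ∈ leviOm :=
      ⟨h1, lt_of_le_of_lt hw' (by norm_num), lt_of_lt_of_le h2 (by positivity)⟩
    exact ((hf _ hmem).differentiableAt.comp w
      ((differentiableAt_const z₁).prodMk differentiableAt_id)).differentiableWithinAt
  exact ccirc_hasSum (by norm_num) hd h3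

lemma hasSum_ccoef (hf : AnalyticOnNhd ℂ f leviOm) (n : ℕ) {u : ℂ}
    (hu : ‖u‖ < 1 / 4) :
    HasSum (fun m => ccoef f m n * u ^ m) (acoef f n u) :=
  ccirc_hasSum (by norm_num)
    ((acoef_differentiableOn hf n).mono closedBall14_subset) hu

lemma ccoef_bound (hf : AnalyticOnNhd ℂ f leviOm) :
    ∃ M : ℝ, 0 ≤ M ∧ ∀ m n : ℕ, ‖ccoef f m n‖ ≤ M * (4 / 3) ^ n * 4 ^ m := by
  have hKsub : closedBall (0 : ℂ) (1 / 4) ×ˢ sphere (0 : ℂ) (3 / 4) ⊆ leviOm := by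
    rintro ⟨z, w⟩ ⟨hz, hw⟩
    exact mem_leviOm_of_sphere (closedBall14_subset hz) hw
  have hKcomp : IsCompact (closedBall (0 : ℂ) (1 / 4) ×ˢ sphere (0 : ℂ) (3 / 4)) :=
    (isCompact_closedBall _ _).prod (isCompact_sphere _ _)
  obtain ⟨C, hC⟩ := hKcomp.exists_bound_of_continuousOn (hf.continuousOn.mono hKsub)
  set M : ℝ := max C 0 with hMdef
  have hM : 0 ≤ M := le_max_right _ _
  refine ⟨M, hM, fun m n => ?_⟩
  have step1 : ∀ z ∈ closedBall (0 : ℂ) (1 / 4), ‖acoef f n z‖ ≤ M * (4 / 3) ^ n := by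
    intro z hz
    have := ccirc_norm_le (φ := fun w => f (z, w)) (r := 3 / 4) (M := M) (by norm_num)
      (fun w hw => (hC (z, w) ⟨hz, hw⟩).trans (le_max_left _ _)) n
    calc ‖acoef f n z‖ ≤ M * ((3 / 4 : ℝ)⁻¹) ^ n := this
      _ = M * (4 / 3) ^ n := by norm_num
  have step2 := ccirc_norm_le (φ := acoef f n) (r := 1 / 4) (M := M * (4 / 3) ^ n)
    (by norm_num) (fun w hw => step1 w (sphere_subset_closedBall hw)) m
  calc ‖ccoef f m n‖ ≤ (M * (4 / 3) ^ n) * ((1 / 4 : ℝ)⁻¹) ^ m := step2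
    _ = M * (4 / 3) ^ n * 4 ^ m := by norm_num

end WithF

/-- The elementary monomial multilinear map on `ℂ × ℂ`. -/
def mono (k m : ℕ) : ContinuousMultilinearMap ℂ (fun _ : Fin k => ℂ × ℂ) ℂ :=
  (ContinuousMultilinearMap.mkPiAlgebra ℂ (Fin k) ℂ).compContinuousLinearMap
    (fun i => if (i : ℕ) < m then ContinuousLinearMap.fst ℂ ℂ ℂ
      else ContinuousLinearMap.snd ℂ ℂ ℂ)

lemma mono_apply {k m : ℕ} (hm : m ≤ k) (v : ℂ × ℂ) :
    mono k m (fun _ => v) = v.1 ^ m * v.2 ^ (k - m) := by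
  classical
  have : mono k m (fun _ => v) = ∏ i : Fin k, (if (i : ℕ) < m then v.1 else v.2) := by
    simp only [mono, ContinuousMultilinearMap.compContinuousLinearMap_apply,
      ContinuousMultilinearMap.mkPiAlgebra_apply]
    exact Finset.prod_congr rfl fun i _ => by split_ifs <;> simp
  rw [this, Fin.prod_univ_eq_prod_range (fun i => if i < m then v.1 else v.2) k,
    Finset.prod_ite, Finset.prod_const, Finset.prod_const]
  have h1 : (Finset.range k).filter (fun x => x < m) = Finset.range m := by
    ext x; simp only [Finset.mem_filter, Finset.mem_range]; omega
  have h2 : ((Finset.range k).filter (fun x => ¬ x < m)).card = k - m := by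
    have := Finset.card_filter_add_card_filter_not
      (s := Finset.range k) (p := fun x => x < m)
    rw [h1] at this
    simp only [Finset.card_range] at this
    omega
  rw [h1, h2, Finset.card_range]

lemma mono_norm_le (k m : ℕ) : ‖mono k m‖ ≤ 1 := by
  rcases Nat.eq_zero_or_pos k with rfl | hk
  · -- empty case
    refine (ContinuousMultilinearMap.norm_compContinuousLinearMap_le _ _).trans ?_
    simp [ContinuousMultilinearMap.norm_mkPiAlgebra_of_empty]
  · haveI : Nonempty (Fin k) := ⟨⟨0, hk⟩⟩
    refine (ContinuousMultilinearMap.norm_compContinuousLinearMap_le _ _).trans ?_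
    have h1 : ‖ContinuousMultilinearMap.mkPiAlgebra ℂ (Fin k) ℂ‖ ≤ 1 :=
      ContinuousMultilinearMap.norm_mkPiAlgebra_le
    have h2 : ∀ i : Fin k, ‖(if (i : ℕ) < m then ContinuousLinearMap.fst ℂ ℂ ℂ
        else ContinuousLinearMap.snd ℂ ℂ ℂ)‖ ≤ 1 := by
      intro i
      split_ifs
      · exact ContinuousLinearMap.opNorm_le_bound _ zero_le_one fun p => by
          simpa using norm_fst_le p
      · exact ContinuousLinearMap.opNorm_le_bound _ zero_le_one fun p => by
          simpa using norm_snd_le p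
    calc _ ≤ 1 * ∏ i : Fin k, ‖(if (i : ℕ) < m then ContinuousLinearMap.fst ℂ ℂ ℂ
        else ContinuousLinearMap.snd ℂ ℂ ℂ)‖ :=
          mul_le_mul_of_nonneg_right h1
            (Finset.prod_nonneg fun i _ => norm_nonneg _)
      _ ≤ 1 * 1 :=
          mul_le_mul_of_nonneg_left
            (Finset.prod_le_one (fun i _ => norm_nonneg _) (fun i _ => h2 i)) zero_le_one
      _ = 1 := by norm_num

/-- The candidate double power series of the extension at the origin. -/
def pser (f : ℂ × ℂ → ℂ) : FormalMultilinearSeries ℂ (ℂ × ℂ) ℂ :=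
  fun k => ∑ m ∈ Finset.range (k + 1), ccoef f m (k - m) • mono k m

/-- The extension function. -/
def gext (f : ℂ × ℂ → ℂ) : ℂ × ℂ → ℂ :=
  fun p => ∑' n, acoef f n p.1 * p.2 ^ n

set_option maxHeartbeats 1000000 in
lemma gext_hasFPowerSeriesOnBall {f : ℂ × ℂ → ℂ} (hf : AnalyticOnNhd ℂ f leviOm) :
    HasFPowerSeriesOnBall (gext f) (pser f) 0 ((1 / 8 : ℝ≥0) : ℝ≥0∞) := by
  obtain ⟨M, hM, hMb⟩ := ccoef_bound hf
  have hr8 : ((1 / 8 : ℝ≥0) : ℝ) = 1 / 8 := by norm_num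
  have hpnorm : ∀ k, ‖pser f k‖ ≤ (k + 1 : ℝ) * (M * 4 ^ k) := by
    intro k
    have hterm : ∀ m ∈ Finset.range (k + 1), ‖ccoef f m (k - m) • mono k m‖ ≤ M * 4 ^ k := by
      intro m hm
      have hmk : m ≤ k := by simpa [Nat.lt_succ_iff] using hm
      refine (norm_smul_le (ccoef f m (k - m)) (mono k m)).trans ?_
      calc ‖ccoef f m (k - m)‖ * ‖mono k m‖ ≤ (M * (4 / 3) ^ (k - m) * 4 ^ m) * 1 :=
            mul_le_mul (hMb m (k - m)) (mono_norm_le k m) (norm_nonneg _)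
              (by positivity)
        _ = M * ((4 / 3) ^ (k - m) * 4 ^ m) := by ring
        _ ≤ M * (4 ^ (k - m) * 4 ^ m) := by
            refine mul_le_mul_of_nonneg_left ?_ hM
            refine mul_le_mul_of_nonneg_right ?_ (by positivity)
            exact pow_le_pow_left₀ (by norm_num) (by norm_num) _
        _ = M * 4 ^ k := by rw [← pow_add, Nat.sub_add_cancel hmk]
    calc ‖pser f k‖ ≤ ∑ m ∈ Finset.range (k + 1), ‖ccoef f m (k - m) • mono k m‖ :=
          norm_sum_le _ _
      _ ≤ ∑ _m ∈ Finset.range (k + 1), M * 4 ^ k := Finset.sum_le_sum hterm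
      _ = (k + 1 : ℝ) * (M * 4 ^ k) := by
          rw [Finset.sum_const, Finset.card_range]
          simp [nsmul_eq_mul]
  constructor
  · -- radius bound
    apply FormalMultilinearSeries.le_radius_of_bound _ (2 * M)
    intro k
    rw [hr8]
    have h48 : (4 : ℝ) ^ k * (1 / 8) ^ k = (1 / 2) ^ k := by
      rw [← mul_pow]; norm_num
    have hk2 : (k + 1 : ℝ) * (1 / 2) ^ k ≤ 2 := by
      have h1 : (k + 1 : ℝ) ≤ 2 ^ (k + 1) := by
        exact_mod_cast (Nat.lt_two_pow_self (n := k + 1)).le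
      have h2 : (0 : ℝ) < 2 ^ k := by positivity
      have : (k + 1 : ℝ) * (1 / 2) ^ k = (k + 1) / 2 ^ k := by
        rw [div_pow]; ring
      rw [this, div_le_iff₀ h2]
      calc (k + 1 : ℝ) ≤ 2 ^ (k + 1) := h1
        _ = 2 * 2 ^ k := by ring
    calc ‖pser f k‖ * (1 / 8 : ℝ) ^ k ≤ ((k + 1 : ℝ) * (M * 4 ^ k)) * (1 / 8) ^ k :=
          mul_le_mul_of_nonneg_right (hpnorm k) (by positivity)
      _ = M * ((k + 1 : ℝ) * ((4 : ℝ) ^ k * (1 / 8) ^ k)) := by ring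
      _ = M * ((k + 1 : ℝ) * (1 / 2) ^ k) := by rw [h48]
      _ ≤ M * 2 := mul_le_mul_of_nonneg_left hk2 hM
      _ = 2 * M := by ring
  · -- positivity of the radius
    exact_mod_cast (by norm_num : (0 : ℝ≥0) < 1 / 8)
  · -- the sum
    intro y hy
    rw [Metric.emetric_ball_nnreal] at hy
    have hynorm : ‖y‖ < 1 / 8 := by
      have := mem_ball_zero_iff.mp hy
      rwa [hr8] at this
    have hy1 : ‖y.1‖ < 1 / 8 := lt_of_le_of_lt (norm_fst_le y) hynorm
    have hy2 : ‖y.2‖ < 1 / 8 := lt_of_le_of_lt (norm_snd_le y) hynorm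
    have hy1' : ‖y.1‖ < 1 / 4 := by
      linarith
    rw [zero_add]
    set F : ℕ × ℕ → ℂ := fun q => (ccoef f q.2 q.1 * y.1 ^ q.2) * y.2 ^ q.1 with hFdef
    have hFsummable : Summable F := by
      have hgeom : Summable (fun q : ℕ × ℕ => (M * (1 / 6) ^ q.1) * ((1 / 2 : ℝ) ^ q.2)) := by
        refine Summable.mul_of_nonneg (f := fun n : ℕ => M * (1 / 6 : ℝ) ^ n)
          (g := fun m : ℕ => (1 / 2 : ℝ) ^ m) ?_ ?_ ?_ ?_
        · exact (summable_geometric_of_lt_one (by norm_num) (by norm_num)).mul_left M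
        · exact summable_geometric_of_lt_one (by norm_num) (by norm_num)
        · intro n; positivity
        · intro m; positivity
      refine Summable.of_norm_bounded hgeom ?_
      rintro ⟨n, m⟩
      have e1 : (4 / 3 : ℝ) ^ n * (1 / 8) ^ n = (1 / 6) ^ n := by rw [← mul_pow]; norm_num
      have e2 : (4 : ℝ) ^ m * (1 / 8) ^ m = (1 / 2) ^ m := by rw [← mul_pow]; norm_num
      calc ‖F (n, m)‖ = ‖ccoef f m n‖ * ‖y.1‖ ^ m * ‖y.2‖ ^ n := by
            simp [hFdef, norm_mul, norm_pow, mul_assoc]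
        _ ≤ (M * (4 / 3) ^ n * 4 ^ m) * (1 / 8) ^ m * (1 / 8) ^ n := by
            have hb1 : ‖y.1‖ ^ m ≤ (1 / 8 : ℝ) ^ m :=
              pow_le_pow_left₀ (norm_nonneg _) hy1.le m
            have hb2 : ‖y.2‖ ^ n ≤ (1 / 8 : ℝ) ^ n :=
              pow_le_pow_left₀ (norm_nonneg _) hy2.le n
            have h0 : (0 : ℝ) ≤ M * (4 / 3) ^ n * 4 ^ m := by positivity
            calc ‖ccoef f m n‖ * ‖y.1‖ ^ m * ‖y.2‖ ^ n
                ≤ (M * (4 / 3) ^ n * 4 ^ m) * ‖y.1‖ ^ m * ‖y.2‖ ^ n := by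
                  refine mul_le_mul_of_nonneg_right
                    (mul_le_mul_of_nonneg_right (hMb m n) (by positivity)) (by positivity)
              _ ≤ (M * (4 / 3) ^ n * 4 ^ m) * (1 / 8) ^ m * ‖y.2‖ ^ n := by
                  refine mul_le_mul_of_nonneg_right
                    (mul_le_mul_of_nonneg_left hb1 h0) (by positivity)
              _ ≤ (M * (4 / 3) ^ n * 4 ^ m) * (1 / 8) ^ m * (1 / 8) ^ n := by
                  refine mul_le_mul_of_nonneg_left hb2 (by positivity)
        _ = (M * (1 / 6) ^ n) * ((1 / 2 : ℝ) ^ m) := by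
            calc (M * (4 / 3) ^ n * 4 ^ m) * (1 / 8) ^ m * (1 / 8) ^ n
                = M * ((4 / 3 : ℝ) ^ n * (1 / 8) ^ n) * ((4 : ℝ) ^ m * (1 / 8) ^ m) := by ring
              _ = (M * (1 / 6) ^ n) * ((1 / 2 : ℝ) ^ m) := by rw [e1, e2]
    have hfib : ∀ n, HasSum (fun m => F (n, m)) (acoef f n y.1 * y.2 ^ n) := fun n =>
      (hasSum_ccoef hf n hy1').mul_right _
    have hgS : HasSum (fun n => acoef f n y.1 * y.2 ^ n) (∑' q, F q) :=
      HasSum.prod_fiberwise hFsummable.hasSum hfib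
    have hgval : gext f y = ∑' q, F q := hgS.tsum_eq.symm ▸ rfl
    have hsig : HasSum (F ∘ (Finset.HasAntidiagonal.sigmaAntidiagonalEquivProd (A := ℕ))) (∑' q, F q) :=
      (Equiv.hasSum_iff _).mpr hFsummable.hasSum
    have hfin : ∀ k : ℕ, HasSum
        (fun p : Finset.HasAntidiagonal.antidiagonal k => (F ∘ (Finset.HasAntidiagonal.sigmaAntidiagonalEquivProd (A := ℕ))) ⟨k, p⟩)
        (∑ p ∈ Finset.HasAntidiagonal.antidiagonal k, F p) := by
      intro k
      have := hasSum_fintype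
        (fun p : Finset.HasAntidiagonal.antidiagonal k => F (p : ℕ × ℕ))
      rwa [Finset.sum_coe_sort (Finset.HasAntidiagonal.antidiagonal k) F] at this
    have hsum2 : HasSum (fun k => ∑ p ∈ Finset.HasAntidiagonal.antidiagonal k, F p) (∑' q, F q) :=
      HasSum.sigma hsig hfin
    have hdiag : ∀ k, ∑ p ∈ Finset.HasAntidiagonal.antidiagonal k, F p = pser f k (fun _ => y) := by
      intro k
      have happ : pser f k (fun _ => y)
          = ∑ m ∈ Finset.range (k + 1), (ccoef f m (k - m) * y.1 ^ m) * y.2 ^ (k - m) := by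
        rw [pser, ContinuousMultilinearMap.sum_apply]
        refine Finset.sum_congr rfl fun m hm => ?_
        have hmk : m ≤ k := by simpa [Nat.lt_succ_iff] using hm
        rw [ContinuousMultilinearMap.smul_apply, mono_apply hmk, smul_eq_mul]
        ring
      rw [happ, Finset.Nat.sum_antidiagonal_eq_sum_range_succ_mk,
        ← Finset.sum_range_reflect]
      refine Finset.sum_congr rfl fun j hj => ?_
      have hj' : j ≤ k := by simpa [Nat.lt_succ_iff] using hj
      have hkj : k + 1 - 1 - j = k - j := by omega
      have hkjj : k - (k - j) = j := Nat.sub_sub_self hj'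
      rw [hkj, hkjj]
    rw [hgval]
    refine HasSum.congr_fun hsum2 fun k => (hdiag k) ▸ rfl

lemma gext_slice_analytic {f : ℂ × ℂ → ℂ} (hf : AnalyticOnNhd ℂ f leviOm) {z₂ : ℂ}
    (h : ‖z₂‖ < 1 / 2) :
    AnalyticOnNhd ℂ (fun z => gext f (z, z₂)) leviD := by
  have hdiff : DifferentiableOn ℂ (fun z => gext f (z, z₂)) leviD := by
    have hTLU : TendstoLocallyUniformlyOn
        (fun (t : Finset ℕ) (z : ℂ) => ∑ n ∈ t, acoef f n z * z₂ ^ n)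
        (fun z => gext f (z, z₂)) Filter.atTop leviD := by
      rw [tendstoLocallyUniformlyOn_iff_forall_isCompact leviD_open]
      intro K hK hKc
      have hKsub : K ×ˢ sphere (0 : ℂ) (3 / 4) ⊆ leviOm := by
        rintro ⟨z, w⟩ ⟨hz, hw⟩
        exact mem_leviOm_of_sphere (hK hz) hw
      obtain ⟨C, hC⟩ := (hKc.prod (isCompact_sphere (0 : ℂ) (3 / 4))).exists_bound_of_continuousOn
        (hf.continuousOn.mono hKsub)
      set M : ℝ := max C 0 with hMdef
      have hM : 0 ≤ M := le_max_right _ _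
      have hu : Summable (fun n : ℕ => M * (2 / 3 : ℝ) ^ n) :=
        (summable_geometric_of_lt_one (by norm_num) (by norm_num)).mul_left M
      have hbound : ∀ (n : ℕ), ∀ z ∈ K, ‖acoef f n z * z₂ ^ n‖ ≤ M * (2 / 3 : ℝ) ^ n := by
        intro n z hz
        have ha : ‖acoef f n z‖ ≤ M * ((3 / 4 : ℝ)⁻¹) ^ n :=
          ccirc_norm_le (by norm_num)
            (fun w hw => (hC (z, w) ⟨hz, hw⟩).trans (le_max_left _ _)) n
        have hz2 : ‖z₂ ^ n‖ ≤ (1 / 2 : ℝ) ^ n := by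
          rw [norm_pow]
          exact pow_le_pow_left₀ (norm_nonneg _) (by linarith) n
        calc ‖acoef f n z * z₂ ^ n‖ = ‖acoef f n z‖ * ‖z₂ ^ n‖ := norm_mul _ _
          _ ≤ (M * ((3 / 4 : ℝ)⁻¹) ^ n) * (1 / 2 : ℝ) ^ n :=
            mul_le_mul ha hz2 (norm_nonneg _) (by positivity)
          _ = M * (((3 / 4 : ℝ)⁻¹ * (1 / 2)) ^ n) := by rw [mul_pow]; ring
          _ = M * (2 / 3 : ℝ) ^ n := by norm_num
      exact tendstoUniformlyOn_tsum hu fun n x hx => hbound n x hx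
    refine hTLU.differentiableOn ?_ leviD_open
    filter_upwards with t
    exact DifferentiableOn.fun_sum fun n _ =>
      (acoef_differentiableOn hf n).mul_const (z₂ ^ n)
  exact hdiff.analyticOnNhd leviD_open

lemma gext_eq_f {f : ℂ × ℂ → ℂ} (hf : AnalyticOnNhd ℂ f leviOm) {p : ℂ × ℂ}
    (hp : p ∈ leviOm) (h2 : ‖p.2‖ < 1 / 2) : gext f p = f p := by
  set S : Set ℂ :=
    {z : ℂ | ‖z‖ < 1 ∧ z.re < 1 / 2 ∧ z.re < ‖p.2‖ ^ 2} with hSdef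
  have hSD : S ⊆ leviD := fun z hz => ⟨hz.1, hz.2.1⟩
  have hconv : Convex ℝ S := by
    have : S = Metric.ball (0 : ℂ) 1 ∩
        ({z : ℂ | z.re < 1 / 2} ∩ {z : ℂ | z.re < ‖p.2‖ ^ 2}) := by
      ext z
      simp [hSdef, mem_ball_zero_iff, and_assoc]
    rw [this]
    exact (convex_ball 0 1).inter ((convex_halfSpace_re_lt _).inter (convex_halfSpace_re_lt _))
  have hg_an : AnalyticOnNhd ℂ (fun z => gext f (z, p.2)) S :=
    (gext_slice_analytic hf h2).mono hSD
  have hf_an : AnalyticOnNhd ℂ (fun z => f (z, p.2)) S := by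
    intro z hz
    have hmem : (z, p.2) ∈ leviOm := ⟨hz.1, h2.trans (by norm_num), hz.2.2⟩
    have h1 : AnalyticAt ℂ (fun z : ℂ => (z, p.2)) z :=
      analyticAt_id.prod analyticAt_const
    exact AnalyticAt.comp (g := f) (f := fun z : ℂ => (z, p.2)) (hf _ hmem) h1
  set z₀ : ℂ := ((-(1 / 2) : ℝ) : ℂ) with hz₀def
  have hz₀re : z₀.re = -(1 / 2) := Complex.ofReal_re _
  have hz₀abs : ‖z₀‖ = 1 / 2 := by
    rw [hz₀def, Complex.norm_real]; norm_num
  have hz₀S : z₀ ∈ S := by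
    refine ⟨by rw [hz₀abs]; norm_num, by rw [hz₀re]; norm_num, ?_⟩
    rw [hz₀re]
    calc (-(1 / 2) : ℝ) < 0 := by norm_num
      _ ≤ ‖p.2‖ ^ 2 := sq_nonneg _
  have hNopen : IsOpen {z : ℂ | ‖z‖ < 1 ∧ z.re < 0} :=
    (isOpen_lt continuous_norm continuous_const).inter
      (isOpen_lt Complex.continuous_re continuous_const)
  have hz₀N : z₀ ∈ {z : ℂ | ‖z‖ < 1 ∧ z.re < 0} := by
    constructor
    · rw [hz₀abs]; norm_num
    · rw [hz₀re]; norm_num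
  have hev : (fun z => gext f (z, p.2)) =ᶠ[𝓝 z₀] (fun z => f (z, p.2)) := by
    filter_upwards [hNopen.mem_nhds hz₀N] with z hz
    exact (hasSum_acoef hf hz.1 hz.2 (h2.trans (by norm_num))).tsum_eq
  have hkey := hg_an.eqOn_of_preconnected_of_eventuallyEq hf_an
    hconv.isPreconnected hz₀S hev
  have hp1S : p.1 ∈ S := by
    refine ⟨hp.1, ?_, hp.2.2⟩
    calc p.1.re < ‖p.2‖ ^ 2 := hp.2.2
      _ < (1 / 2 : ℝ) ^ 2 := by
          exact pow_lt_pow_left₀ h2 (norm_nonneg _) (by norm_num)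
      _ < 1 / 2 := by norm_num
  have := hkey hp1S
  simpa using this

end LeviAux

/-- **Local Levi extension at a strictly pseudoconvex boundary point (concave side).**
Let `Ω = {(z₁, z₂) : |z₁| < 1, |z₂| < 1, Re z₁ < |z₂|²}`. There is an open
neighborhood `V` of the origin such that every function holomorphic on `Ω` extends
holomorphically to `Ω ∪ V`. -/
theorem levi_extension :
    ∃ V : Set (ℂ × ℂ), IsOpen V ∧ (0 : ℂ × ℂ) ∈ V ∧
      ∀ f : ℂ × ℂ → ℂ,
        AnalyticOn ℂ f
          {p : ℂ × ℂ | ‖p.1‖ < 1 ∧ ‖p.2‖ < 1 ∧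
            p.1.re < ‖p.2‖ ^ 2} →
        ∃ g : ℂ × ℂ → ℂ,
          AnalyticOn ℂ g
            ({p : ℂ × ℂ | ‖p.1‖ < 1 ∧ ‖p.2‖ < 1 ∧
              p.1.re < ‖p.2‖ ^ 2} ∪ V) ∧
          Set.EqOn g f
            {p : ℂ × ℂ | ‖p.1‖ < 1 ∧ ‖p.2‖ < 1 ∧
              p.1.re < ‖p.2‖ ^ 2} := by
  classical
  refine ⟨Metric.ball (0 : ℂ × ℂ) (1 / 8), Metric.isOpen_ball,
    Metric.mem_ball_self (by norm_num), ?_⟩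
  intro f hfA
  have hf : AnalyticOnNhd ℂ f leviOm :=
    (leviOm_open.analyticOn_iff_analyticOnNhd).mp hfA
  refine ⟨fun p => if p ∈ leviOm then f p else gext f p, ?_, ?_⟩
  · -- analyticity on the union
    have hOn : AnalyticOnNhd ℂ (fun p => if p ∈ leviOm then f p else gext f p)
        (leviOm ∪ Metric.ball (0 : ℂ × ℂ) (1 / 8)) := by
      rintro x (hx | hx)
      · refine (hf x hx).congr ?_
        filter_upwards [leviOm_open.mem_nhds hx] with p hp
        exact (if_pos hp).symm
      · have hg_an : AnalyticAt ℂ (gext f) x := by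
          have hps := gext_hasFPowerSeriesOnBall hf
          refine hps.analyticAt_of_mem ?_
          rw [Metric.emetric_ball_nnreal]
          have h8 : ((1 / 8 : ℝ≥0) : ℝ) = (1 / 8 : ℝ) := by norm_num
          rw [h8]
          exact hx
        refine hg_an.congr ?_
        filter_upwards [Metric.isOpen_ball.mem_nhds hx] with p hp
        by_cases hpOm : p ∈ leviOm
        · have hpn : ‖p‖ < 1 / 8 := mem_ball_zero_iff.mp hp
          have h2 : ‖p.2‖ < 1 / 2 := by
            calc ‖p.2‖ ≤ ‖p‖ := norm_snd_le p
              _ < 1 / 8 := hpn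
              _ < 1 / 2 := by norm_num
          calc gext f p = f p := gext_eq_f hf hpOm h2
            _ = _ := (if_pos hpOm).symm
        · exact (if_neg hpOm).symm
    exact hOn.analyticOn
  · intro p hp
    exact if_pos hp
end

section
/- Let D ⊆ ℂ be an open set and let (z_k) be a sequence of points of D that has no accumulation point in D (i.e., the sequence is divergent in D). Then there exists a function f : ℂ → ℂ analytic on D such that the sequence (|f(z_k)|) is unbounded. -/
/-- **Holomorphic convexity of plane domains.** Every open set `D ⊆ ℂ` is
holomorphically convex: for every sequence `(z k)` in `D` with no accumulation
point in `D` there is a holomorphic function `f` on `D` with `(|f (z k)|)`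
unbounded. In particular every domain in `ℂ` is a domain of holomorphy. -/
theorem plane_domain_holomorphically_convex
    {D : Set ℂ} (hD : IsOpen D) (z : ℕ → ℂ) (hz : ∀ k, z k ∈ D)
    (hdiv : ∀ p ∈ D, ¬ MapClusterPt p Filter.atTop z) :
    ∃ f : ℂ → ℂ, AnalyticOn ℂ f D ∧
      ¬ BddAbove (Set.range fun k => ‖f (z k)‖) := by
  by_cases hb : BddAbove (Set.range fun k => ‖z k‖)
  · -- bounded case: get a cluster point p outside D, use 1/(w - p)
    obtain ⟨M, hM⟩ := hb
    have hzball : ∀ n, z n ∈ Metric.closedBall (0 : ℂ) M := by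
      intro n
      simp only [Metric.mem_closedBall, dist_zero_right]
      exact hM ⟨n, rfl⟩
    obtain ⟨p, -, φ, hφ, hlim⟩ :=
      (isCompact_closedBall (0 : ℂ) M).tendsto_subseq hzball
    have hcluster : MapClusterPt p Filter.atTop z :=
      MapClusterPt.of_comp hφ.tendsto_atTop hlim.mapClusterPt
    have hpD : p ∉ D := fun hp => hdiv p hp hcluster
    refine ⟨fun w => (w - p)⁻¹, ?_, ?_⟩
    · have h1 : AnalyticOnNhd ℂ (fun w => (w - p)⁻¹) D := by
        apply AnalyticOnNhd.inv
        · exact (analyticOnNhd_id).sub analyticOnNhd_const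
        · intro w hw
          exact sub_ne_zero.2 (fun h => hpD (h ▸ hw))
      exact h1.analyticOn
    · rintro ⟨C, hC⟩
      have hC0 : (0 : ℝ) ≤ C := le_trans (norm_nonneg _) (hC ⟨0, rfl⟩)
      have hε : (0 : ℝ) < (C + 1)⁻¹ := by positivity
      obtain ⟨N, hN⟩ := Metric.tendsto_atTop.1 hlim ((C + 1)⁻¹) hε
      have hn := hN N le_rfl
      set n := N
      have hne : z (φ n) - p ≠ 0 :=
        sub_ne_zero.2 (fun h => hpD (h ▸ hz (φ n)))
      have habs : ‖z (φ n) - p‖ < (C + 1)⁻¹ := by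
        simpa [Complex.dist_eq, Function.comp] using hn
      have habs0 : 0 < ‖z (φ n) - p‖ := by
        simpa using (norm_pos_iff.2 hne)
      have hbig : C + 1 < ‖(z (φ n) - p)⁻¹‖ := by
        rw [norm_inv]
        rw [lt_inv_comm₀ (by positivity) habs0]
        exact habs
      have hle : ‖(z (φ n) - p)⁻¹‖ ≤ C := hC ⟨φ n, rfl⟩
      linarith
  · -- unbounded case: f = id
    refine ⟨id, analyticOnNhd_id.analyticOn, ?_⟩
    simpa using hb
end
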